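/- arXiv:1412.1975 — 3 statements merged into one kernel-verified Lean document; each statement's English description precedes it below -/
import Mathlib

section
/- Let T be the attractor of an IFS {f_1,…,f_q} of injective contractions of a complete metric space, and suppose T is connected. Define the exceptional set E := ⋃ f_α(T) ∩ f_β(T), the union taken over all nonempty finite words α, β over {1,…,q} for which f_α(T) ∩ f_β(T) is a singleton. Then either T has a cut point, or for every irreducible cut set X of T every isolated point of X belongs to E; that is, X admits a partition X = X' ∪ X₀ with X₀ ⊆ E, where X' is the derived set of X. -/
open Set Filter Topology

/-- A set is the union of two nonempty separated sets. -/
def SepUnion {α : Type*} [TopologicalSpace α] (S : Set α) : Prop :=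
  ∃ U V : Set α, S = U ∪ V ∧ U.Nonempty ∧ V.Nonempty ∧
    closure U ∩ V = ∅ ∧ U ∩ closure V = ∅

/-- `X` is a cut set of `T`: `X ⊆ T` and `T \ X` is disconnected. -/
def IsCutSet {α : Type*} [TopologicalSpace α] (T X : Set α) : Prop :=
  X ⊆ T ∧ SepUnion (T \ X)

/-- `X` is an irreducible cut set of `T`. -/
def IsIrredCutSet {α : Type*} [TopologicalSpace α] (T X : Set α) : Prop :=
  IsCutSet T X ∧ ∀ X₀ : Set α, X₀ ⊂ X → closure X₀ ∩ T ⊆ X₀ → ¬ SepUnion (T \ X₀)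

/-- `f_α` for a word `α` (a list of indices): composition of the maps. -/
def wordMap {α : Type*} {q : ℕ} (f : Fin q → α → α) : List (Fin q) → α → α :=
  fun l => l.foldr (fun i g => f i ∘ g) id

lemma sepUnion_of_opens {α : Type*} [TopologicalSpace α] {S u v : Set α}
    (hu : IsOpen u) (hv : IsOpen v) (hS : S ⊆ u ∪ v)
    (hdis : S ∩ (u ∩ v) = ∅) (h1 : (S ∩ u).Nonempty) (h2 : (S ∩ v).Nonempty) :
    SepUnion S := by
  refine ⟨S ∩ u, S ∩ v, ?_, h1, h2, ?_, ?_⟩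
  · ext y
    constructor
    · intro hy
      rcases hS hy with h | h
      · exact Or.inl ⟨hy, h⟩
      · exact Or.inr ⟨hy, h⟩
    · rintro (⟨h, _⟩ | ⟨h, _⟩) <;> exact h
  · apply eq_empty_of_subset_empty
    intro y ⟨hyc, hyS, hyv⟩
    have : y ∈ closure (v ∩ (S ∩ u)) := hv.inter_closure ⟨hyv, hyc⟩
    have he : v ∩ (S ∩ u) = ∅ := by
      apply eq_empty_of_subset_empty
      rintro z ⟨hzv, hzS, hzu⟩
      rw [← hdis]; exact ⟨hzS, hzu, hzv⟩
    rw [he, closure_empty] at this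
    exact this
  · apply eq_empty_of_subset_empty
    intro y ⟨⟨hyS, hyu⟩, hyc⟩
    have : y ∈ closure (u ∩ (S ∩ v)) := hu.inter_closure ⟨hyu, hyc⟩
    have he : u ∩ (S ∩ v) = ∅ := by
      apply eq_empty_of_subset_empty
      rintro z ⟨hzu, hzS, hzv⟩
      rw [← hdis]; exact ⟨hzS, hzu, hzv⟩
    rw [he, closure_empty] at this
    exact this

lemma isPreconnected_of_not_sepUnion {α : Type*} [TopologicalSpace α] {S : Set α}
    (h : ¬ SepUnion S) : IsPreconnected S := by
  by_contra hpc
  apply h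
  rw [IsPreconnected] at hpc
  push_neg at hpc
  obtain ⟨u, v, hu, hv, hsub, h1, h2, h3⟩ := hpc
  exact sepUnion_of_opens hu hv hsub h3 h1 h2

lemma separatedNhds_of_sep {α : Type*} [MetricSpace α] {U V : Set α}
    (hV : V.Nonempty) (hU : U.Nonempty)
    (h1 : closure U ∩ V = ∅) (h2 : U ∩ closure V = ∅) :
    ∃ u v : Set α, IsOpen u ∧ IsOpen v ∧ U ⊆ u ∧ V ⊆ v ∧ Disjoint u v := by
  refine ⟨{x | Metric.infDist x U < Metric.infDist x V},
    {x | Metric.infDist x V < Metric.infDist x U}, ?_, ?_, ?_, ?_, ?_⟩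
  · exact isOpen_lt (Metric.continuous_infDist_pt U) (Metric.continuous_infDist_pt V)
  · exact isOpen_lt (Metric.continuous_infDist_pt V) (Metric.continuous_infDist_pt U)
  · intro x hx
    have hd0 : Metric.infDist x U = 0 := Metric.infDist_zero_of_mem hx
    have hnc : x ∉ closure V := fun hc =>
      (eq_empty_iff_forall_notMem.mp h2 x) ⟨hx, hc⟩
    have : Metric.infDist x V ≠ 0 := by
      intro h0
      exact hnc ((Metric.mem_closure_iff_infDist_zero hV).mpr h0)
    have hpos : 0 < Metric.infDist x V := lt_of_le_of_ne Metric.infDist_nonneg (Ne.symm this)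
    simpa [hd0] using hpos
  · intro x hx
    have hd0 : Metric.infDist x V = 0 := Metric.infDist_zero_of_mem hx
    have hnc : x ∉ closure U := fun hc =>
      (eq_empty_iff_forall_notMem.mp h1 x) ⟨hc, hx⟩
    have : Metric.infDist x U ≠ 0 := by
      intro h0
      exact hnc ((Metric.mem_closure_iff_infDist_zero hU).mpr h0)
    have hpos : 0 < Metric.infDist x U := lt_of_le_of_ne Metric.infDist_nonneg (Ne.symm this)
    simpa [hd0] using hpos
  · rw [Set.disjoint_iff]
    rintro x ⟨hx1, hx2⟩
    simp only [mem_setOf_eq] at hx1 hx2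
    exact absurd (lt_trans hx1 hx2) (lt_irrefl _)

lemma wordMap_nil {α : Type*} {q : ℕ} (f : Fin q → α → α) : wordMap f [] = id := rfl

lemma wordMap_cons {α : Type*} {q : ℕ} (f : Fin q → α → α) (i : Fin q) (w : List (Fin q)) :
    wordMap f (i :: w) = f i ∘ wordMap f w := rfl

lemma wordMap_inj {α : Type*} {q : ℕ} {f : Fin q → α → α}
    (hinj : ∀ i, Function.Injective (f i)) (w : List (Fin q)) :
    Function.Injective (wordMap f w) := by
  induction w with
  | nil => exact fun a b h => h
  | cons i w ih => exact (hinj i).comp ih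

lemma wordMap_lip {α : Type*} [MetricSpace α] {q : ℕ} {f : Fin q → α → α} {Km : NNReal}
    (hl : ∀ i, LipschitzWith Km (f i)) (w : List (Fin q)) :
    LipschitzWith (Km ^ w.length) (wordMap f w) := by
  induction w with
  | nil => simpa [wordMap_nil] using LipschitzWith.id
  | cons i w ih =>
    have := (hl i).comp ih
    rw [wordMap_cons]
    convert this using 2
    simp [pow_succ, mul_comm]

theorem statement0 {α : Type*} [MetricSpace α] [CompleteSpace α] {q : ℕ}
    (f : Fin q → α → α)
    (hinj : ∀ i, Function.Injective (f i))
    (hcon : ∀ i, ∃ K, ContractingWith K (f i))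
    (T : Set α) (hne : T.Nonempty) (hcpt : IsCompact T)
    (hattr : T = ⋃ i, f i '' T) (hconn : IsConnected T) :
    (∃ z ∈ T, SepUnion (T \ {z})) ∨
      ∀ X : Set α, IsIrredCutSet T X →
        ∃ X₀ : Set α,
          X₀ ⊆ {x | ∃ a b : List (Fin q), a ≠ [] ∧ b ≠ [] ∧
              wordMap f a '' T ∩ wordMap f b '' T = {x}} ∧
          X = {x ∈ X | AccPt x (𝓟 X)} ∪ X₀ := by
  classical
  by_cases hz : ∃ z ∈ T, SepUnion (T \ {z})
  · exact Or.inl hz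
  right
  push_neg at hz
  have hpc : ∀ z ∈ T, IsPreconnected (T \ {z}) := fun z hzT =>
    isPreconnected_of_not_sepUnion (hz z hzT)
  -- contraction data
  choose K hK using hcon
  set Km : NNReal := Finset.univ.sup K with hKmdef
  have hKm1 : Km < 1 := by
    apply Finset.sup_lt_iff (by norm_num : (⊥ : NNReal) < 1) |>.mpr
    exact fun i _ => (hK i).1
  have hlipm : ∀ i, LipschitzWith Km (f i) :=
    fun i => (hK i).2.weaken (Finset.le_sup (Finset.mem_univ i))
  have hlipw : ∀ w : List (Fin q), LipschitzWith (Km ^ w.length) (wordMap f w) :=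
    wordMap_lip hlipm
  set P : List (Fin q) → Set α := fun w => wordMap f w '' T with hPdef
  have hfsub : ∀ i, f i '' T ⊆ T := by
    intro i
    conv_rhs => rw [hattr]
    exact subset_iUnion (fun i => f i '' T) i
  have hsubT : ∀ w : List (Fin q), P w ⊆ T := by
    intro w
    induction w with
    | nil => simp [hPdef, wordMap_nil]
    | cons i w ih =>
      have h1 : P (i :: w) = f i '' P w := by
        simp only [hPdef, wordMap_cons, Set.image_comp]
      rw [h1]
      exact (Set.image_mono (f := f i) ih).trans (hfsub i)
  have hcover : ∀ n : ℕ, ∀ y ∈ T, ∃ w : List (Fin q), w.length = n ∧ y ∈ P w := by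
    intro n
    induction n with
    | zero => exact fun y hy => ⟨[], rfl, by simpa [hPdef, wordMap_nil] using hy⟩
    | succ n ih =>
      intro y hy
      have hy' := hy
      rw [hattr] at hy'
      obtain ⟨s, ⟨i, rfl⟩, hys⟩ := hy'
      obtain ⟨z, hzT, rfl⟩ := hys
      obtain ⟨w, hwl, hzw⟩ := ih z hzT
      refine ⟨i :: w, by simp [hwl], ?_⟩
      have h1 : P (i :: w) = f i '' P w := by
        simp only [hPdef, wordMap_cons, Set.image_comp]
      rw [h1]
      exact mem_image_of_mem _ hzw
  have hDb : Bornology.IsBounded T := hcpt.isBounded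
  -- separation of T \ X
  intro X hX
  obtain ⟨⟨hXT, hsep⟩, hirr⟩ := hX
  obtain ⟨U, V, hUV, hUne, hVne, hc1, hc2⟩ := hsep
  obtain ⟨u, v, hu, hv, hUu, hVv, huv⟩ := separatedNhds_of_sep hVne hUne hc1 hc2
  have hUTX : U ⊆ T \ X := hUV ▸ subset_union_left
  have hVTX : V ⊆ T \ X := hUV ▸ subset_union_right
  have hTXsub : T \ X ⊆ u ∪ v := by rw [hUV]; exact union_subset_union hUu hVv
  have hYsub : T \ (u ∪ v) ⊆ X := by
    rintro y ⟨hyT, hyuv⟩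
    by_contra hyX
    exact hyuv (hTXsub ⟨hyT, hyX⟩)
  have hXeq : X = T \ (u ∪ v) := by
    by_contra hne'
    apply hirr (T \ (u ∪ v)) (hYsub.ssubset_of_ne (fun h => hne' h.symm)) ?_ ?_
    · have hcl : IsClosed (T \ (u ∪ v)) := hcpt.isClosed.sdiff (hu.union hv)
      rw [hcl.closure_eq]
      exact inter_subset_left
    · have hTY : T \ (T \ (u ∪ v)) = T ∩ (u ∪ v) := by
        ext y
        simp only [mem_diff, mem_inter_iff, not_and, not_not]
        constructor
        · rintro ⟨hyT, h⟩
          exact ⟨hyT, by by_contra hc; exact hc (h hyT)⟩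
        · rintro ⟨hyT, h⟩
          exact ⟨hyT, fun _ => h⟩
      rw [hTY]
      apply sepUnion_of_opens hu hv inter_subset_right ?_ ?_ ?_
      · apply eq_empty_of_subset_empty
        rintro z ⟨_, hzu, hzv⟩
        exact (Set.disjoint_iff.mp huv) ⟨hzu, hzv⟩
      · obtain ⟨y, hy⟩ := hUne
        exact ⟨y, ⟨(hUTX hy).1, Or.inl (hUu hy)⟩, hUu hy⟩
      · obtain ⟨y, hy⟩ := hVne
        exact ⟨y, ⟨(hVTX hy).1, Or.inr (hVv hy)⟩, hVv hy⟩
  have hXclosed : IsClosed X := by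
    rw [hXeq]; exact hcpt.isClosed.sdiff (hu.union hv)
  have hXuv : ∀ y ∈ X, y ∉ u ∪ v := by
    rw [hXeq]; exact fun y hy => hy.2
  have hTU : (T \ X) ∩ u = U := by
    apply subset_antisymm
    · rintro y ⟨hyTX, hyu⟩
      rw [hUV] at hyTX
      rcases hyTX with h | h
      · exact h
      · exact ((Set.disjoint_iff.mp huv) ⟨hyu, hVv h⟩).elim
    · exact fun y hy => ⟨hUTX hy, hUu hy⟩
  have hTV : (T \ X) ∩ v = V := by
    apply subset_antisymm
    · rintro y ⟨hyTX, hyv⟩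
      rw [hUV] at hyTX
      rcases hyTX with h | h
      · exact ((Set.disjoint_iff.mp huv) ⟨hUu h, hyv⟩).elim
      · exact h
    · exact fun y hy => ⟨hVTX hy, hVv hy⟩
  -- the witness set: isolated points of X
  refine ⟨{x ∈ X | ¬ AccPt x (𝓟 X)}, ?_, ?_⟩
  swap
  · ext y
    simp only [mem_union, mem_setOf_eq]
    by_cases h : AccPt y (𝓟 X) <;> tauto
  rintro x ⟨hxX, hxacc⟩
  have hxT : x ∈ T := hXT hxX
  -- isolation radius
  rw [accPt_iff_nhds] at hxacc
  push_neg at hxacc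
  obtain ⟨N, hN, hNx⟩ := hxacc
  obtain ⟨ε, hε, hball⟩ := Metric.mem_nhds_iff.mp hN
  have hballX : ∀ y, y ∈ Metric.ball x ε → y ∈ X → y = x :=
    fun y hy hyX => hNx y ⟨hball hy, hyX⟩
  -- x is not in u ∪ v
  have hxuv : x ∉ u ∪ v := hXuv x hxX
  -- T \ (X \ {x}) = (T \ X) ∪ {x}
  have hS : T \ (X \ {x}) = (T \ X) ∪ {x} := by
    ext y
    simp only [mem_diff, mem_union, mem_singleton_iff, not_and, not_not]
    constructor
    · rintro ⟨hyT, h⟩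
      by_cases hyX : y ∈ X
      · exact Or.inr (h hyX)
      · exact Or.inl ⟨hyT, hyX⟩
    · rintro (⟨hyT, hyX⟩ | rfl)
      · exact ⟨hyT, fun h => absurd h hyX⟩
      · exact ⟨hxT, fun _ => rfl⟩
  -- X \ {x} is a proper subset of X, closed in T
  have hssub : X \ {x} ⊂ X := by
    constructor
    · exact diff_subset
    · intro h
      exact (h hxX).2 rfl
  have hclx : closure (X \ {x}) ∩ T ⊆ X \ {x} := by
    have h2 : X \ {x} = X \ Metric.ball x ε := by
      ext y
      constructor
      · rintro ⟨hyX, hyx⟩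
        exact ⟨hyX, fun hb => hyx (hballX y hb hyX)⟩
      · rintro ⟨hyX, hyb⟩
        exact ⟨hyX, fun h => hyb (by rw [mem_singleton_iff] at h; rw [h]; exact Metric.mem_ball_self hε)⟩
    have h1 : IsClosed (X \ Metric.ball x ε) := hXclosed.sdiff Metric.isOpen_ball
    rw [h2, h1.closure_eq]
    exact inter_subset_left
  -- x lies on the boundary of both sides
  have hclU : x ∈ closure U := by
    by_contra hxcU
    apply hirr _ hssub hclx
    rw [hS]
    have hb : IsOpen (v ∪ (closure U)ᶜ) := hv.union isClosed_closure.isOpen_compl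
    have hsub1 : (T \ X) ∪ {x} ⊆ u ∪ (v ∪ (closure U)ᶜ) := by
      rintro y (hyTX | hy)
      · rcases hTXsub hyTX with h | h
        · exact Or.inl h
        · exact Or.inr (Or.inl h)
      · rw [mem_singleton_iff] at hy; subst hy
        exact Or.inr (Or.inr hxcU)
    have hdis1 : ((T \ X) ∪ {x}) ∩ (u ∩ (v ∪ (closure U)ᶜ)) = ∅ := by
      apply eq_empty_of_subset_empty
      rintro z ⟨hzS, hzu, hzv | hzc⟩
      · exact (Set.disjoint_iff.mp huv) ⟨hzu, hzv⟩
      · rcases hzS with hzTX | hz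
        · have : z ∈ U := by rw [← hTU]; exact ⟨hzTX, hzu⟩
          exact hzc (subset_closure this)
        · rw [mem_singleton_iff] at hz; subst hz
          exact hxuv (Or.inl hzu)
    have hne1 : (((T \ X) ∪ {x}) ∩ u).Nonempty := by
      obtain ⟨y, hy⟩ := hUne
      exact ⟨y, ⟨Or.inl (hUTX hy), hUu hy⟩⟩
    have hne2 : (((T \ X) ∪ {x}) ∩ (v ∪ (closure U)ᶜ)).Nonempty :=
      ⟨x, ⟨Or.inr rfl, Or.inr hxcU⟩⟩
    exact sepUnion_of_opens hu hb hsub1 hdis1 hne1 hne2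
  have hclV : x ∈ closure V := by
    by_contra hxcV
    apply hirr _ hssub hclx
    rw [hS]
    have hb : IsOpen (u ∪ (closure V)ᶜ) := hu.union isClosed_closure.isOpen_compl
    have hsub1 : (T \ X) ∪ {x} ⊆ v ∪ (u ∪ (closure V)ᶜ) := by
      rintro y (hyTX | hy)
      · rcases hTXsub hyTX with h | h
        · exact Or.inr (Or.inl h)
        · exact Or.inl h
      · rw [mem_singleton_iff] at hy; subst hy
        exact Or.inr (Or.inr hxcV)
    have hdis1 : ((T \ X) ∪ {x}) ∩ (v ∩ (u ∪ (closure V)ᶜ)) = ∅ := by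
      apply eq_empty_of_subset_empty
      rintro z ⟨hzS, hzv, hzu | hzc⟩
      · exact (Set.disjoint_iff.mp huv) ⟨hzu, hzv⟩
      · rcases hzS with hzTX | hz
        · have : z ∈ V := by rw [← hTV]; exact ⟨hzTX, hzv⟩
          exact hzc (subset_closure this)
        · rw [mem_singleton_iff] at hz; subst hz
          exact hxuv (Or.inr hzv)
    have hne1 : (((T \ X) ∪ {x}) ∩ v).Nonempty := by
      obtain ⟨y, hy⟩ := hVne
      exact ⟨y, ⟨Or.inl (hVTX hy), hVv hy⟩⟩
    have hne2 : (((T \ X) ∪ {x}) ∩ (u ∪ (closure V)ᶜ)).Nonempty :=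
      ⟨x, ⟨Or.inr rfl, Or.inr hxcV⟩⟩
    exact sepUnion_of_opens hv hb hsub1 hdis1 hne1 hne2
  -- choose level n with small pieces
  have htend : Tendsto (fun n : ℕ => (Km : ℝ) ^ n * Metric.diam T) atTop (𝓝 0) := by
    have h0 : Tendsto (fun n : ℕ => (Km : ℝ) ^ n) atTop (𝓝 0) :=
      tendsto_pow_atTop_nhds_zero_of_lt_one Km.coe_nonneg hKm1
    simpa using h0.mul_const (Metric.diam T)
  have hev : ∀ᶠ n : ℕ in atTop, (Km : ℝ) ^ n * Metric.diam T < ε :=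
    htend.eventually_lt_const hε
  obtain ⟨n, hnd, hn1⟩ := (hev.and (eventually_ge_atTop 1)).exists
  have hpiece : ∀ w : List (Fin q), w.length = n → ∀ y ∈ P w, ∀ z ∈ P w, dist y z < ε := by
    rintro w hwl y ⟨y', hy', rfl⟩ z ⟨z', hz', rfl⟩
    calc dist (wordMap f w y') (wordMap f w z') ≤ (Km ^ w.length : NNReal) * dist y' z' :=
          (hlipw w).dist_le_mul y' z'
      _ ≤ (Km : ℝ) ^ n * Metric.diam T := by
          rw [hwl]
          push_cast
          apply mul_le_mul_of_nonneg_left (Metric.dist_le_diam_of_mem hDb hy' hz')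
          positivity
      _ < ε := hnd
  -- pieces not containing x form a closed set avoiding x
  have hWfin : {w : List (Fin q) | w.length = n ∧ x ∉ P w}.Finite :=
    (List.finite_length_eq (Fin q) n).subset (fun w hw => hw.1)
  set C : Set α := ⋃ w ∈ {w : List (Fin q) | w.length = n ∧ x ∉ P w}, P w with hCdef
  have hCclosed : IsClosed C :=
    hWfin.isClosed_biUnion fun w _ => (hcpt.image (hlipw w).continuous).isClosed
  have hxC : x ∉ C := by
    intro hxC
    rw [hCdef, mem_iUnion₂] at hxC
    obtain ⟨w, hw, hxw⟩ := hxC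
    exact hw.2 hxw
  obtain ⟨δ, hδ, hballC⟩ := Metric.isOpen_iff.mp hCclosed.isOpen_compl x hxC
  -- every point of T near x lies in a piece containing x
  have hnear : ∀ y ∈ T, dist x y < δ → ∃ w : List (Fin q), w.length = n ∧ x ∈ P w ∧ y ∈ P w := by
    intro y hyT hyd
    obtain ⟨w, hwl, hyw⟩ := hcover n y hyT
    by_cases hxw : x ∈ P w
    · exact ⟨w, hwl, hxw, hyw⟩
    · exfalso
      apply hballC (show y ∈ Metric.ball x δ by rwa [Metric.mem_ball, dist_comm])
      exact mem_biUnion ⟨hwl, hxw⟩ hyw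
  obtain ⟨yU, hyU, hyUd⟩ := Metric.mem_closure_iff.mp hclU δ hδ
  obtain ⟨wa, hwal, hxwa, hywa⟩ := hnear yU (hUTX hyU).1 hyUd
  obtain ⟨yV, hyV, hyVd⟩ := Metric.mem_closure_iff.mp hclV δ hδ
  obtain ⟨wb, hwbl, hxwb, hywb⟩ := hnear yV (hVTX hyV).1 hyVd
  -- punctured pieces are preconnected and avoid X
  have hpunct : ∀ w : List (Fin q), w.length = n → x ∈ P w →
      IsPreconnected (P w \ {x}) ∧ P w \ {x} ⊆ u ∪ v := by
    intro w hwl hxw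
    constructor
    · obtain ⟨x₀, hx₀T, hgx⟩ := hxw
      have himg : P w \ {x} = wordMap f w '' (T \ {x₀}) := by
        rw [Set.image_diff (wordMap_inj hinj w), Set.image_singleton, hgx]
      rw [himg]
      exact (hpc x₀ hx₀T).image _ ((hlipw w).continuous.continuousOn)
    · rintro z ⟨hzP, hzx⟩
      have hzT : z ∈ T := hsubT w hzP
      have hzX : z ∉ X := by
        intro hzX
        apply hzx
        rw [mem_singleton_iff]
        exact hballX z (by rw [Metric.mem_ball]; exact hpiece w hwl z hzP x hxw) hzX
      exact hTXsub ⟨hzT, hzX⟩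
  obtain ⟨hca, hsa⟩ := hpunct wa hwal hxwa
  obtain ⟨hcb, hsb⟩ := hpunct wb hwbl hxwb
  have hyUne : yU ≠ x := fun h => (hUTX hyU).2 (h ▸ hxX)
  have hPau : P wa \ {x} ⊆ u :=
    hca.subset_left_of_subset_union hu hv huv hsa ⟨yU, ⟨hywa, hyUne⟩, hUu hyU⟩
  have hyVne : yV ≠ x := fun h => (hVTX hyV).2 (h ▸ hxX)
  have hPbv : P wb \ {x} ⊆ v :=
    hcb.subset_right_of_subset_union hu hv huv hsb ⟨yV, ⟨hywb, hyVne⟩, hVv hyV⟩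
  refine ⟨wa, wb, ?_, ?_, ?_⟩
  · exact List.length_pos_iff.mp (by rw [hwal]; omega)
  · exact List.length_pos_iff.mp (by rw [hwbl]; omega)
  · apply subset_antisymm
    · rintro z ⟨hza, hzb⟩
      rw [mem_singleton_iff]
      by_contra hzx
      have hz1 : z ∈ u := hPau ⟨hza, fun h => hzx (mem_singleton_iff.mp h)⟩
      have hz2 : z ∈ v := hPbv ⟨hzb, fun h => hzx (mem_singleton_iff.mp h)⟩
      exact (Set.disjoint_iff.mp huv) ⟨hz1, hz2⟩
    · rintro z hz
      rw [mem_singleton_iff] at hz; subst hz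
      exact ⟨hxwa, hxwb⟩
end

section
/- Let T be a connected ℤ^d-tile T(A,D) such that T ∩ (T+s) is not a singleton for every s ∈ ℤ^d. Then either T has a cut point, or every irreducible cut set of T is a perfect set (closed with no isolated points). -/
open Set Filter Topology Matrix

noncomputable section

/-- The real matrix obtained from an integer matrix. -/
def rmat {d : ℕ} (A : Matrix (Fin d) (Fin d) ℤ) : Matrix (Fin d) (Fin d) ℝ :=
  A.map Int.cast

/-- The real vector obtained from an integer vector. -/
def rvec {d : ℕ} (v : Fin d → ℤ) : Fin d → ℝ := fun i => (v i : ℝ)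

/-- The translate `T + v` of `T` by a lattice vector `v`. -/
def trT {d : ℕ} (T : Set (Fin d → ℝ)) (v : Fin d → ℤ) : Set (Fin d → ℝ) :=
  (fun x => x + rvec v) '' T

/-- Every complex eigenvalue of `A` has modulus `> 1`. -/
def Expanding {d : ℕ} (A : Matrix (Fin d) (Fin d) ℤ) : Prop :=
  ∀ μ : ℂ, Module.End.HasEigenvalue (Matrix.toLin' (A.map (Int.cast : ℤ → ℂ))) μ →
    1 < ‖μ‖

/-- `D` is a complete set of coset representatives of `ℤ^d / A ℤ^d`. -/
def ResidueSystem {d : ℕ} (A : Matrix (Fin d) (Fin d) ℤ) (D : Set (Fin d → ℤ)) : Prop :=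
  ∀ x : Fin d → ℤ, ∃! e, e ∈ D ∧ ∃ y : Fin d → ℤ, x = A.mulVec y + e

/-- `T` is the attractor `T(A,D)`: nonempty, compact, with `A·T = T + D`. -/
def SelfAffine {d : ℕ} (A : Matrix (Fin d) (Fin d) ℤ) (D : Set (Fin d → ℤ))
    (T : Set (Fin d → ℝ)) : Prop :=
  T.Nonempty ∧ IsCompact T ∧
    (rmat A).mulVec '' T = ⋃ e ∈ D, (fun x => x + rvec e) '' T

/-- `T = T(A,D)` is a `ℤ^d`-tile: a self-affine attractor for an expanding integer
matrix and a standard digit set, with nonempty interior, tiling `ℝ^d` by `ℤ^d`. -/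
def IsZdTile {d : ℕ} (A : Matrix (Fin d) (Fin d) ℤ) (D : Set (Fin d → ℤ))
    (T : Set (Fin d → ℝ)) : Prop :=
  Expanding A ∧ ResidueSystem A D ∧ SelfAffine A D T ∧ (interior T).Nonempty ∧
    (⋃ v : Fin d → ℤ, trT T v) = univ ∧
    Pairwise fun v₁ v₂ : Fin d → ℤ => interior (trT T v₁) ∩ trT T v₂ = ∅

/-- `V_n = D + A·D + ⋯ + A^{n-1}·D`, the vertex set of the `n`-th Hata graph. -/
def Vset {d : ℕ} (A : Matrix (Fin d) (Fin d) ℤ) (D : Set (Fin d → ℤ)) (n : ℕ) :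
    Set (Fin d → ℤ) :=
  {v | ∃ dig : Fin n → (Fin d → ℤ), (∀ k, dig k ∈ D) ∧
    v = ∑ k : Fin n, (A ^ (k : ℕ)).mulVec (dig k)}

/-- The set of children `C(U) = A·U + D`. -/
def childSet {d : ℕ} (A : Matrix (Fin d) (Fin d) ℤ) (D : Set (Fin d → ℤ))
    (U : Set (Fin d → ℤ)) : Set (Fin d → ℤ) :=
  {w | ∃ u ∈ U, ∃ e ∈ D, w = A.mulVec u + e}

/-- `X_n(W) = ⋃_{v ∈ W} A^{-n}(T + v)`. -/
def XnSet {d : ℕ} (A : Matrix (Fin d) (Fin d) ℤ) (T : Set (Fin d → ℝ)) (n : ℕ)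
    (W : Set (Fin d → ℤ)) : Set (Fin d → ℝ) :=
  ⋃ v ∈ W, ((rmat A)⁻¹ ^ n).mulVec '' trT T v

/-- The subgraph of the `n`-th Hata graph induced on `W` is connected:
any two vertices of `W` are joined by a path inside `W`, consecutive tiles meeting. -/
def HataConn {d : ℕ} (T : Set (Fin d → ℝ)) (W : Set (Fin d → ℤ)) : Prop :=
  ∀ v ∈ W, ∀ w ∈ W,
    Relation.ReflTransGen (fun a b => a ∈ W ∧ b ∈ W ∧ (trT T a ∩ trT T b).Nonempty) v w

section TopoAux

variable {α β : Type*} [TopologicalSpace α] [TopologicalSpace β]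

lemma sepUnion_of_image (g : α ≃ₜ β) {S : Set α} (h : SepUnion (g '' S)) : SepUnion S := by
  obtain ⟨U, V, hUV, hUne, hVne, hcUV, hUcV⟩ := h
  refine ⟨g.symm '' U, g.symm '' V, ?_, hUne.image _, hVne.image _, ?_, ?_⟩
  · rw [← Set.image_union, ← hUV, ← Set.image_comp]
    simp
  · rw [← g.symm.image_closure,
      ← Set.image_inter g.symm.injective, hcUV, Set.image_empty]
  · rw [← g.symm.image_closure,
      ← Set.image_inter g.symm.injective, hUcV, Set.image_empty]

end TopoAux

section ClosedAux

variable {α : Type*} [MetricSpace α]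

lemma irredCutSet_structure {T X : Set α} (hT : IsClosed T) (h : IsIrredCutSet T X) :
    ∃ U V : Set α, T \ X = U ∪ V ∧ U.Nonempty ∧ V.Nonempty ∧ closure U ∩ V = ∅ ∧
      U ∩ closure V = ∅ ∧ X = closure U ∩ closure V ∩ T := by
  obtain ⟨⟨hXT, U, V, hUV, hUne, hVne, hcUV, hUcV⟩, hirr⟩ := h
  refine ⟨U, V, hUV, hUne, hVne, hcUV, hUcV, ?_⟩
  have hUTX : U ⊆ T \ X := hUV ▸ Set.subset_union_left
  have hVTX : V ⊆ T \ X := hUV ▸ Set.subset_union_right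
  have hUX : ∀ u ∈ U, u ∉ X := fun u hu => (hUTX hu).2
  have hVX : ∀ v ∈ V, v ∉ X := fun v hv => (hVTX hv).2
  set C := closure U ∩ closure V ∩ T with hC
  have hCX : C ⊆ X := by
    rintro t ⟨⟨htU, htV⟩, htT⟩
    by_contra htX
    have ht' : t ∈ U ∪ V := hUV ▸ ⟨htT, htX⟩
    rcases ht' with h' | h'
    · exact Set.eq_empty_iff_forall_notMem.1 hUcV t ⟨h', htV⟩
    · exact Set.eq_empty_iff_forall_notMem.1 hcUV t ⟨htU, h'⟩
  have hCclosed : IsClosed C := (isClosed_closure.inter isClosed_closure).inter hT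
  by_cases hW : (T \ (closure U ∪ closure V)).Nonempty
  · -- sphere trick: contradiction with irreducibility
    exfalso
    obtain ⟨w, hwT, hwUV⟩ := hW
    have hopen : IsOpen (closure U ∪ closure V)ᶜ :=
      (isClosed_closure.union isClosed_closure).isOpen_compl
    obtain ⟨r', hr', hball'⟩ := Metric.isOpen_iff.1 hopen w hwUV
    set r := r' / 2 with hrdef
    have hr : 0 < r := half_pos hr'
    have hball : Metric.closedBall w r ⊆ (closure U ∪ closure V)ᶜ :=
      (Metric.closedBall_subset_ball (half_lt_self hr')).trans hball'
    have hWX : ∀ t ∈ T, t ∉ closure U ∪ closure V → t ∈ X := by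
      intro t htT htn
      by_contra htX
      rcases (hUV ▸ ⟨htT, htX⟩ : t ∈ U ∪ V) with h' | h'
      · exact htn (Or.inl (subset_closure h'))
      · exact htn (Or.inr (subset_closure h'))
    set X₀ := C ∪ (Metric.sphere w r ∩ T) with hX₀
    have hX₀X : X₀ ⊆ X := by
      rintro t (htC | ⟨hts, htT⟩)
      · exact hCX htC
      · exact hWX t htT (hball (Metric.sphere_subset_closedBall hts))
    have hwX : w ∈ X := hWX w hwT hwUV
    have hwnX₀ : w ∉ X₀ := by
      rintro (hwC | ⟨hws, -⟩)
      · exact hwUV (Or.inl hwC.1.1)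
      · rw [Metric.mem_sphere, dist_self] at hws
        exact hr.ne' hws.symm
    have hX₀closed : IsClosed X₀ := hCclosed.union (Metric.isClosed_sphere.inter hT)
    refine hirr X₀ ⟨hX₀X, fun hs => hwnX₀ (hs hwX)⟩
      (by rw [hX₀closed.closure_eq]; exact Set.inter_subset_left) ?_
    have hcBX : Metric.closedBall w r ∩ T ⊆ X := fun t ⟨ht1, ht2⟩ => hWX t ht2 (hball ht1)
    refine ⟨Metric.ball w r ∩ T, T \ (C ∪ Metric.closedBall w r), ?_,
      ⟨w, Metric.mem_ball_self hr, hwT⟩, ?_, ?_, ?_⟩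
    · ext t
      constructor
      · rintro ⟨htT, htX₀⟩
        by_cases htb : t ∈ Metric.closedBall w r
        · left
          refine ⟨?_, htT⟩
          rcases lt_or_eq_of_le (Metric.mem_closedBall.1 htb) with h' | h'
          · exact Metric.mem_ball.2 h'
          · exact absurd (Or.inr ⟨Metric.mem_sphere.2 h', htT⟩) htX₀
        · exact Or.inr ⟨htT, fun hc => hc.elim (fun hc' => htX₀ (Or.inl hc')) htb⟩
      · rintro (⟨htb, htT⟩ | ⟨htT, htn⟩)
        · refine ⟨htT, ?_⟩
          rintro (htC | ⟨hts, -⟩)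
          · exact (hball (Metric.ball_subset_closedBall htb)) (Or.inl htC.1.1)
          · rw [Metric.mem_sphere] at hts
            rw [Metric.mem_ball] at htb
            exact hts.not_lt htb
        · refine ⟨htT, ?_⟩
          rintro (htC | ⟨hts, -⟩)
          · exact htn (Or.inl htC)
          · exact htn (Or.inr (Metric.sphere_subset_closedBall hts))
    · obtain ⟨u, hu⟩ := hUne
      refine ⟨u, (hUTX hu).1, ?_⟩
      rintro (huC | hub)
      · exact hUX u hu (hCX huC)
      · exact (hball hub) (Or.inl (subset_closure hu))
    · apply Set.eq_empty_iff_forall_notMem.2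
      rintro t ⟨htc, htT, htn⟩
      have : t ∈ Metric.closedBall w r :=
        Metric.closure_ball_subset_closedBall ((closure_mono Set.inter_subset_left) htc)
      exact htn (Or.inr this)
    · apply Set.eq_empty_iff_forall_notMem.2
      rintro t ⟨⟨htb, -⟩, htc⟩
      rw [mem_closure_iff] at htc
      obtain ⟨q, hq1, -, hq2⟩ := htc _ Metric.isOpen_ball htb
      exact hq2 (Or.inr (Metric.ball_subset_closedBall hq1))
  · -- W = ∅ : X = C
    rw [Set.not_nonempty_iff_eq_empty, Set.diff_eq_empty] at hW
    refine le_antisymm ?_ hCX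
    by_contra hXC
    have hCss : C ⊂ X := ⟨hCX, fun h' => hXC h'⟩
    refine hirr C hCss (by rw [hCclosed.closure_eq]; exact Set.inter_subset_left) ?_
    refine ⟨(closure U ∩ T) \ C, (closure V ∩ T) \ C, ?_, ?_, ?_, ?_, ?_⟩
    · ext t
      constructor
      · rintro ⟨htT, htC⟩
        rcases hW htT with h' | h'
        · exact Or.inl ⟨⟨h', htT⟩, htC⟩
        · exact Or.inr ⟨⟨h', htT⟩, htC⟩
      · rintro (⟨⟨-, htT⟩, htC⟩ | ⟨⟨-, htT⟩, htC⟩) <;> exact ⟨htT, htC⟩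
    · obtain ⟨u, hu⟩ := hUne
      exact ⟨u, ⟨subset_closure hu, (hUTX hu).1⟩, fun hc => hUX u hu (hCX hc)⟩
    · obtain ⟨v, hv⟩ := hVne
      exact ⟨v, ⟨subset_closure hv, (hVTX hv).1⟩, fun hc => hVX v hv (hCX hc)⟩
    · apply Set.eq_empty_iff_forall_notMem.2
      rintro t ⟨htc, ⟨htV, htT⟩, htC⟩
      have htU : t ∈ closure U := by
        have : closure ((closure U ∩ T) \ C) ⊆ closure U :=
          closure_minimal (fun s hs => hs.1.1) isClosed_closure
        exact this htc
      exact htC ⟨⟨htU, htV⟩, htT⟩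
    · apply Set.eq_empty_iff_forall_notMem.2
      rintro t ⟨⟨⟨htU, htT⟩, htC⟩, htc⟩
      have htV : t ∈ closure V := by
        have : closure ((closure V ∩ T) \ C) ⊆ closure V :=
          closure_minimal (fun s hs => hs.1.1) isClosed_closure
        exact this htc
      exact htC ⟨⟨htU, htV⟩, htT⟩

end ClosedAux
section AnalysisAux

attribute [local instance] Matrix.linftyOpNormedAddCommGroup Matrix.linftyOpNormedRing
  Matrix.linftyOpNormedAlgebra

variable {d : ℕ}

private lemma cdet_ne_of_expanding (A : Matrix (Fin d) (Fin d) ℤ) (hE : Expanding A) :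
    (A.map (Int.cast : ℤ → ℂ)).det ≠ 0 := by
  intro h
  obtain ⟨v, hv0, hv⟩ := (Matrix.exists_mulVec_eq_zero_iff).2 h
  have hev : Module.End.HasEigenvalue (Matrix.toLin' (A.map (Int.cast : ℤ → ℂ))) 0 := by
    apply Module.End.hasEigenvalue_of_hasEigenvector (x := v)
    refine ⟨Module.End.mem_eigenspace_iff.2 ?_, hv0⟩
    rw [Matrix.toLin'_apply, hv, zero_smul]
  have := hE 0 hev
  simp only [norm_zero] at this
  linarith

private lemma rdet_unit (A : Matrix (Fin d) (Fin d) ℤ) (hE : Expanding A) :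
    IsUnit (rmat A).det := by
  rw [isUnit_iff_ne_zero]
  have h1 : ((Int.castRingHom ℂ) : ℤ →+* ℂ).mapMatrix A = A.map (Int.cast : ℤ → ℂ) := rfl
  have h2 : (rmat A).det = ((A.det : ℤ) : ℝ) := by
    rw [show rmat A = ((Int.castRingHom ℝ) : ℤ →+* ℝ).mapMatrix A from rfl,
      ← RingHom.map_det]
    rfl
  rw [h2]
  intro h
  have hz : (A.det : ℤ) = 0 := by exact_mod_cast h
  apply cdet_ne_of_expanding A hE
  rw [← h1, ← RingHom.map_det]
  simp [hz]

private lemma contract_of_expanding (hd : 0 < d) (A : Matrix (Fin d) (Fin d) ℤ)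
    (hE : Expanding A) (ε : ℝ) (hε : 0 < ε) :
    ∃ n : ℕ, ∀ p : Fin d → ℝ, ‖((rmat A)⁻¹ ^ n) *ᵥ p‖ ≤ ε * ‖p‖ := by
  haveI : Nonempty (Fin d) := ⟨⟨0, hd⟩⟩
  set Ac : Matrix (Fin d) (Fin d) ℂ := A.map (Int.cast : ℤ → ℂ) with hAcdef
  have hdet : Ac.det ≠ 0 := cdet_ne_of_expanding A hE
  have hdetU : IsUnit Ac.det := isUnit_iff_ne_zero.2 hdet
  set M : Matrix (Fin d) (Fin d) ℂ := Ac⁻¹ with hMdef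
  have hAcM : Ac * M = 1 := Matrix.mul_nonsing_inv _ hdetU
  have hMAc : M * Ac = 1 := Matrix.nonsing_inv_mul _ hdetU
  have hMdet : M.det ≠ 0 := by
    rw [hMdef, Matrix.det_nonsing_inv, Ring.inverse_eq_inv']
    exact inv_ne_zero hdet
  have hMunit : IsUnit M := (Matrix.isUnit_iff_isUnit_det _).2 (isUnit_iff_ne_zero.2 hMdet)
  -- every spectral value of Ac has norm > 1
  have hspecA : ∀ μ ∈ spectrum ℂ Ac, 1 < ‖μ‖ := by
    intro μ hμ
    have hμ' : μ ∈ spectrum ℂ (Matrix.toLin' Ac) := by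
      have := AlgEquiv.spectrum_eq (R := ℂ) (Matrix.toLinAlgEquiv' : Matrix (Fin d) (Fin d) ℂ ≃ₐ[ℂ]
        ((Fin d → ℂ) →ₗ[ℂ] (Fin d → ℂ))) Ac
      rw [show Matrix.toLinAlgEquiv' Ac = Matrix.toLin' Ac from rfl] at this
      rw [this]
      exact hμ
    have := hE μ (Module.End.hasEigenvalue_iff_mem_spectrum.2 hμ')
    simpa [Complex.norm_def] using this
  -- minimum of the spectrum of Ac
  obtain ⟨μ₀, hμ₀, hminOn⟩ := (spectrum.isCompact Ac).exists_isMinOn (spectrum.nonempty Ac)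
    continuous_norm.continuousOn
  have hmin : ∀ y ∈ spectrum ℂ Ac, ‖μ₀‖ ≤ ‖y‖ := fun y hy => isMinOn_iff.1 hminOn y hy
  set m : ℝ := ‖μ₀‖ with hmdef
  have hm1 : 1 < m := hspecA μ₀ hμ₀
  have hm0 : 0 < m := lt_trans one_pos hm1
  -- spectral values of M are ≤ m⁻¹
  have hspecM : ∀ lam ∈ spectrum ℂ M, ‖lam‖ ≤ m⁻¹ := by
    intro lam hlam
    have hlam0 : lam ≠ 0 := by
      rintro rfl
      exact ((spectrum.zero_mem_iff ℂ).1 hlam) hMunit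
    have hlamdet : (algebraMap ℂ (Matrix (Fin d) (Fin d) ℂ) lam - M).det = 0 := by
      by_contra hne
      exact (spectrum.mem_iff.1 hlam)
        ((Matrix.isUnit_iff_isUnit_det _).2 (isUnit_iff_ne_zero.2 hne))
    have hfact : algebraMap ℂ (Matrix (Fin d) (Fin d) ℂ) lam - M = M * (lam • Ac - 1) := by
      rw [Matrix.mul_sub, Matrix.mul_smul, hMAc, Matrix.mul_one,
        Algebra.algebraMap_eq_smul_one]
    have hd1 : (lam • Ac - 1).det = 0 := by
      have := hlamdet
      rw [hfact, Matrix.det_mul] at this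
      rcases mul_eq_zero.1 this with h | h
      · exact absurd h hMdet
      · exact h
    have hfact2 : lam • Ac - 1 = lam • (Ac - lam⁻¹ • 1) := by
      rw [smul_sub, smul_smul, mul_inv_cancel₀ hlam0, one_smul]
    have hd2 : (Ac - lam⁻¹ • (1 : Matrix (Fin d) (Fin d) ℂ)).det = 0 := by
      rw [hfact2, Matrix.det_smul] at hd1
      rcases mul_eq_zero.1 hd1 with h | h
      · exact absurd h (pow_ne_zero _ hlam0)
      · exact h
    have hmem : lam⁻¹ ∈ spectrum ℂ Ac := by
      rw [spectrum.mem_iff]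
      intro hunit
      have : IsUnit (Ac - lam⁻¹ • (1 : Matrix (Fin d) (Fin d) ℂ)) := by
        have := hunit.neg
        rwa [neg_sub, Algebra.algebraMap_eq_smul_one] at this
      rw [Matrix.isUnit_iff_isUnit_det _, isUnit_iff_ne_zero] at this
      exact this hd2
    have h1 : m ≤ ‖lam⁻¹‖ := hmin _ hmem
    rw [norm_inv] at h1
    have := inv_anti₀ hm0 h1
    rwa [inv_inv] at this
  -- spectral radius of M is < 1
  have hsr : spectralRadius ℂ M < 1 := by
    have hle : spectralRadius ℂ M ≤ ENNReal.ofReal m⁻¹ := by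
      rw [show spectralRadius ℂ M = ⨆ k ∈ spectrum ℂ M, (‖k‖₊ : ENNReal) from rfl]
      apply iSup₂_le
      intro k hk
      rw [← ENNReal.ofReal_coe_nnreal]
      apply ENNReal.ofReal_le_ofReal
      simpa using hspecM k hk
    refine lt_of_le_of_lt hle ?_
    rw [ENNReal.ofReal_lt_one]
    rw [inv_lt_one_iff₀]
    right; exact hm1
  -- Gelfand's formula gives a power with small norm
  have hten := spectrum.pow_nnnorm_pow_one_div_tendsto_nhds_spectralRadius M
  have hev : ∀ᶠ n : ℕ in Filter.atTop, ((‖M ^ n‖₊ : ENNReal) ^ (1 / (n : ℝ))) < 1 :=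
    hten.eventually_lt_const hsr
  obtain ⟨n₀, hn₀, hn₀1⟩ := (hev.and (Filter.eventually_ge_atTop 1)).exists
  have hq1 : ‖M ^ n₀‖₊ < 1 := by
    by_contra hc
    push_neg at hc
    have : (1 : ENNReal) ≤ (‖M ^ n₀‖₊ : ENNReal) ^ (1 / (n₀ : ℝ)) := by
      calc (1 : ENNReal) = 1 ^ (1 / (n₀ : ℝ)) := by rw [ENNReal.one_rpow]
      _ ≤ (‖M ^ n₀‖₊ : ENNReal) ^ (1 / (n₀ : ℝ)) := by
          apply ENNReal.rpow_le_rpow _ (by positivity)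
          exact_mod_cast hc
    exact absurd hn₀ (not_lt.2 this)
  set q : ℝ := (‖M ^ n₀‖₊ : ℝ) with hqdef
  have hq0 : 0 ≤ q := by positivity
  have hqlt : q < 1 := by exact_mod_cast hq1
  obtain ⟨k, hk⟩ := exists_pow_lt_of_lt_one hε hqlt
  refine ⟨n₀ * k, ?_⟩
  -- transfer to the real matrix
  have hmapA : (rmat A).map (Complex.ofRealHom : ℝ →+* ℂ) = Ac := by
    ext i j
    simp [rmat, Matrix.map_apply, hAcdef]
  have hNc : ((rmat A)⁻¹).map (Complex.ofRealHom : ℝ →+* ℂ) = M := by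
    symm
    apply Matrix.inv_eq_right_inv
    rw [← hmapA, ← Matrix.map_mul, Matrix.mul_nonsing_inv _ (rdet_unit A hE)]
    exact Matrix.map_one _ (map_zero _) (map_one _)
  have hpowm : ∀ nn : ℕ, (((rmat A)⁻¹ ^ nn).map (Complex.ofRealHom : ℝ →+* ℂ)) = M ^ nn := by
    intro nn
    rw [← hNc]
    have := map_pow ((Complex.ofRealHom : ℝ →+* ℂ).mapMatrix) ((rmat A)⁻¹) nn
    simpa [RingHom.mapMatrix_apply] using this
  intro p
  have key : ∀ i, ‖(((rmat A)⁻¹ ^ (n₀ * k)) *ᵥ p) i‖ ≤ (‖M ^ (n₀ * k)‖) * ‖p‖ := by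
    intro i
    set pc : Fin d → ℂ := fun j => ((p j : ℝ) : ℂ) with hpc
    have hvec : (M ^ (n₀ * k)) *ᵥ pc = fun i => (((((rmat A)⁻¹ ^ (n₀ * k)) *ᵥ p) i : ℝ) : ℂ) := by
      rw [← hpowm (n₀ * k)]
      funext i'
      simp only [Matrix.mulVec, dotProduct, Matrix.map_apply, hpc]
      push_cast
      rfl
    have h1 : ‖(((rmat A)⁻¹ ^ (n₀ * k)) *ᵥ p) i‖ = ‖((M ^ (n₀ * k)) *ᵥ pc) i‖ := by
      rw [hvec]
      simp [Complex.norm_real]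
    rw [h1]
    calc ‖((M ^ (n₀ * k)) *ᵥ pc) i‖ ≤ ‖(M ^ (n₀ * k)) *ᵥ pc‖ := norm_le_pi_norm _ i
    _ ≤ ‖M ^ (n₀ * k)‖ * ‖pc‖ := Matrix.linfty_opNorm_mulVec _ _
    _ = ‖M ^ (n₀ * k)‖ * ‖p‖ := by
        congr 1
        rw [Pi.norm_def, Pi.norm_def]
        congr 1
        apply Finset.sup_congr rfl
        intro j _
        simp [hpc]
  have hnorm : ‖M ^ (n₀ * k)‖ ≤ q ^ k := by
    rw [pow_mul]
    calc ‖(M ^ n₀) ^ k‖ ≤ ‖M ^ n₀‖ ^ k := norm_pow_le _ _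
    _ = q ^ k := by rw [hqdef]; rfl
  have hfin : ∀ i, ‖(((rmat A)⁻¹ ^ (n₀ * k)) *ᵥ p) i‖ ≤ ε * ‖p‖ := by
    intro i
    refine le_trans (key i) ?_
    apply mul_le_mul (le_trans hnorm hk.le) le_rfl (norm_nonneg _) hε.le
  exact (pi_norm_le_iff_of_nonneg (by positivity)).2 hfin

end AnalysisAux
section CoverAux

variable {d : ℕ}

private lemma rvec_zero : rvec (0 : Fin d → ℤ) = 0 := by
  funext i; simp [rvec]

private lemma rvec_add (v w : Fin d → ℤ) : rvec (v + w) = rvec v + rvec w := by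
  funext i; simp [rvec]

private lemma rvec_sub (v w : Fin d → ℤ) : rvec (v - w) = rvec v - rvec w := by
  funext i; simp [rvec]

private lemma rvec_mulVec (A : Matrix (Fin d) (Fin d) ℤ) (v : Fin d → ℤ) :
    rvec (A *ᵥ v) = (rmat A) *ᵥ (rvec v) := by
  funext i
  simp only [rvec, rmat, Matrix.mulVec, dotProduct, Matrix.map_apply]
  push_cast
  rfl

private lemma Vset_zero (A : Matrix (Fin d) (Fin d) ℤ) (D : Set (Fin d → ℤ)) :
    Vset A D 0 = {0} := by
  ext v
  constructor
  · rintro ⟨dig, -, hv⟩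
    simp only [Finset.univ_eq_empty, Finset.sum_empty] at hv
    simpa using hv
  · rintro rfl
    exact ⟨Fin.elim0, fun k => k.elim0, by simp⟩

private lemma Vset_succ (A : Matrix (Fin d) (Fin d) ℤ) (D : Set (Fin d → ℤ)) (n : ℕ) :
    Vset A D (n + 1) = {w | ∃ e ∈ D, ∃ v ∈ Vset A D n, w = e + A *ᵥ v} := by
  ext w
  constructor
  · rintro ⟨dig, hdig, hw⟩
    refine ⟨dig 0, hdig 0, ∑ k : Fin n, (A ^ (k : ℕ)) *ᵥ (dig k.succ),
      ⟨fun k => dig k.succ, fun k => hdig k.succ, rfl⟩, ?_⟩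
    rw [hw, Fin.sum_univ_succ]
    congr 1
    · simp
    · rw [show (A *ᵥ ∑ k : Fin n, (A ^ (k : ℕ)) *ᵥ (dig k.succ))
          = Matrix.mulVecLin A (∑ k : Fin n, (A ^ (k : ℕ)) *ᵥ (dig k.succ)) from rfl, map_sum]
      apply Finset.sum_congr rfl
      intro k _
      rw [Matrix.mulVecLin_apply, Matrix.mulVec_mulVec, ← pow_succ', Fin.val_succ]
  · rintro ⟨e, he, v, ⟨dig, hdig, hv⟩, hw⟩
    refine ⟨Fin.cons e (fun k => dig k), fun k => ?_, ?_⟩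
    · refine Fin.cases ?_ ?_ k
      · simpa using he
      · intro j; simpa using hdig j
    · rw [hw, Fin.sum_univ_succ]
      congr 1
      · simp
      · rw [hv, show (A *ᵥ ∑ k : Fin n, (A ^ (k : ℕ)) *ᵥ (dig k))
            = Matrix.mulVecLin A (∑ k : Fin n, (A ^ (k : ℕ)) *ᵥ (dig k)) from rfl, map_sum]
        apply Finset.sum_congr rfl
        intro k _
        rw [Matrix.mulVecLin_apply, Matrix.mulVec_mulVec, ← pow_succ', Fin.val_succ]
        simp

variable (A : Matrix (Fin d) (Fin d) ℤ) {D : Set (Fin d → ℤ)} {T : Set (Fin d → ℝ)}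

private lemma tile_mem (hdetU : IsUnit (rmat A).det)
    (hSA3 : (rmat A).mulVec '' T = ⋃ e ∈ D, (fun x => x + rvec e) '' T) (n : ℕ) :
    ∀ x, x ∈ T ↔ ∃ v ∈ Vset A D n, ∃ t ∈ T, x = ((rmat A)⁻¹ ^ n) *ᵥ (t + rvec v) := by
  have hAB : rmat A * (rmat A)⁻¹ = 1 := Matrix.mul_nonsing_inv _ hdetU
  have hBA : (rmat A)⁻¹ * rmat A = 1 := Matrix.nonsing_inv_mul _ hdetU
  have hBAv : ∀ y : Fin d → ℝ, (rmat A)⁻¹ *ᵥ (rmat A *ᵥ y) = y := by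
    intro y; rw [Matrix.mulVec_mulVec, hBA, Matrix.one_mulVec]
  have hABv : ∀ y : Fin d → ℝ, rmat A *ᵥ ((rmat A)⁻¹ *ᵥ y) = y := by
    intro y; rw [Matrix.mulVec_mulVec, hAB, Matrix.one_mulVec]
  have hmem1 : ∀ x, x ∈ T ↔ ∃ e ∈ D, ∃ t ∈ T, x = (rmat A)⁻¹ *ᵥ (t + rvec e) := by
    intro x
    constructor
    · intro hx
      have : rmat A *ᵥ x ∈ (rmat A).mulVec '' T := ⟨x, hx, rfl⟩
      rw [hSA3] at this
      obtain ⟨e, he, t, ht, hxe⟩ := Set.mem_iUnion₂.1 this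
      exact ⟨e, he, t, ht, by rw [show t + rvec e = rmat A *ᵥ x from hxe, hBAv]⟩
    · rintro ⟨e, he, t, ht, rfl⟩
      have : t + rvec e ∈ (rmat A).mulVec '' T := by
        rw [hSA3]
        exact Set.mem_iUnion₂.2 ⟨e, he, t, ht, rfl⟩
      obtain ⟨y, hy, hyx⟩ := this
      have : (rmat A)⁻¹ *ᵥ (t + rvec e) = y := by rw [← hyx, hBAv]
      rw [this]; exact hy
  -- key computation
  have hcomp : ∀ (m : ℕ) (s : Fin d → ℝ) (v e : Fin d → ℤ),
      ((rmat A)⁻¹ ^ m) *ᵥ ((rmat A)⁻¹ *ᵥ (s + rvec e) + rvec v)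
        = ((rmat A)⁻¹ ^ (m + 1)) *ᵥ (s + rvec (e + A *ᵥ v)) := by
    intro m s v e
    have h1 : (rmat A)⁻¹ *ᵥ (s + rvec e) + rvec v
        = (rmat A)⁻¹ *ᵥ (s + rvec e + rmat A *ᵥ rvec v) := by
      conv_rhs => rw [Matrix.mulVec_add]
      rw [hBAv]
    rw [h1, Matrix.mulVec_mulVec, ← pow_succ, rvec_add, rvec_mulVec]
    congr 1
    abel
  induction n with
  | zero =>
    intro x
    constructor
    · intro hx
      refine ⟨0, by rw [Vset_zero]; rfl, x, hx, ?_⟩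
      simp [rvec_zero]
    · rintro ⟨v, hv, t, ht, rfl⟩
      rw [Vset_zero] at hv
      rcases hv with rfl
      simpa [rvec_zero] using ht
  | succ n ih =>
    intro x
    constructor
    · intro hx
      obtain ⟨v, hv, t, ht, rfl⟩ := (ih x).1 hx
      obtain ⟨e, he, s, hs, rfl⟩ := (hmem1 t).1 ht
      refine ⟨e + A *ᵥ v, ?_, s, hs, ?_⟩
      · rw [Vset_succ]; exact ⟨e, he, v, hv, rfl⟩
      · rw [← hcomp]
    · rintro ⟨w, hw, s, hs, rfl⟩
      rw [Vset_succ] at hw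
      obtain ⟨e, he, v, hv, rfl⟩ := hw
      have ht : (rmat A)⁻¹ *ᵥ (s + rvec e) ∈ T := (hmem1 _).2 ⟨e, he, s, hs, rfl⟩
      apply (ih _).2
      exact ⟨v, hv, _, ht, by rw [← hcomp]⟩

end CoverAux
section MiscAux

variable {d : ℕ}

private lemma finite_int_vec (c : ℝ) : {v : Fin d → ℤ | ‖rvec v‖ ≤ c}.Finite := by
  apply Set.Finite.subset (Set.finite_Icc (fun _ : Fin d => -⌈c⌉) fun _ : Fin d => ⌈c⌉)
  intro v hv
  simp only [Set.mem_setOf_eq] at hv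
  constructor <;> intro i
  · have h1 : ‖(rvec v) i‖ ≤ c := le_trans (norm_le_pi_norm (rvec v) i) hv
    rw [Real.norm_eq_abs, abs_le] at h1
    have : -((⌈c⌉ : ℝ)) ≤ ((v i : ℤ) : ℝ) := le_trans (neg_le_neg (Int.le_ceil c)) h1.1
    exact_mod_cast this
  · have h1 : ‖(rvec v) i‖ ≤ c := le_trans (norm_le_pi_norm (rvec v) i) hv
    rw [Real.norm_eq_abs, abs_le] at h1
    have : ((v i : ℤ) : ℝ) ≤ ((⌈c⌉ : ℝ)) := le_trans h1.2 (Int.le_ceil c)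
    exact_mod_cast this

private lemma exists_tile_homeo (A : Matrix (Fin d) (Fin d) ℤ) (hdetU : IsUnit (rmat A).det)
    (n : ℕ) (v : Fin d → ℤ) :
    ∃ g : (Fin d → ℝ) ≃ₜ (Fin d → ℝ), ∀ y, g y = ((rmat A)⁻¹ ^ n) *ᵥ (y + rvec v) := by
  have hAB : rmat A * (rmat A)⁻¹ = 1 := Matrix.mul_nonsing_inv _ hdetU
  have hBA : (rmat A)⁻¹ * rmat A = 1 := Matrix.nonsing_inv_mul _ hdetU
  have hcomm : Commute (rmat A) ((rmat A)⁻¹) := by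
    unfold Commute SemiconjBy
    rw [hAB, hBA]
  have hABn : (rmat A) ^ n * ((rmat A)⁻¹) ^ n = 1 := by
    rw [← hcomm.mul_pow, hAB, one_pow]
  have hBAn : ((rmat A)⁻¹) ^ n * (rmat A) ^ n = 1 := by
    rw [← hcomm.symm.mul_pow, hBA, one_pow]
  let e : (Fin d → ℝ) ≃ₗ[ℝ] (Fin d → ℝ) :=
    LinearEquiv.ofLinear (Matrix.mulVecLin (((rmat A)⁻¹) ^ n))
      (Matrix.mulVecLin ((rmat A) ^ n))
      (by
        apply LinearMap.ext
        intro y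
        show ((rmat A)⁻¹ ^ n) *ᵥ ((rmat A ^ n) *ᵥ y) = y
        rw [Matrix.mulVec_mulVec, hBAn, Matrix.one_mulVec])
      (by
        apply LinearMap.ext
        intro y
        show (rmat A ^ n) *ᵥ (((rmat A)⁻¹ ^ n) *ᵥ y) = y
        rw [Matrix.mulVec_mulVec, hABn, Matrix.one_mulVec])
  refine ⟨(Homeomorph.addRight (rvec v)).trans e.toContinuousLinearEquiv.toHomeomorph,
    fun y => ?_⟩
  rfl

end MiscAux
theorem statement3 {d : ℕ} (A : Matrix (Fin d) (Fin d) ℤ) (D : Set (Fin d → ℤ))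
    (T : Set (Fin d → ℝ)) (htile : IsZdTile A D T) (hconn : IsConnected T)
    (hnosing : ∀ s : Fin d → ℤ, ¬ ∃ p, T ∩ trT T s = {p}) :
    (∃ z ∈ T, SepUnion (T \ {z})) ∨
      ∀ X : Set (Fin d → ℝ), IsIrredCutSet T X → Perfect X := by
  classical
  by_cases hcut : ∃ z ∈ T, SepUnion (T \ {z})
  · exact Or.inl hcut
  push_neg at hcut
  right
  intro X hX
  obtain ⟨hE, hRS, hSA, hint, hun, hpair⟩ := htile
  obtain ⟨hTne, hTcomp, hSA3⟩ := hSA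
  have hTclosed : IsClosed T := hTcomp.isClosed
  -- the case d = 0 is impossible
  rcases Nat.eq_zero_or_pos d with hd0 | hd
  · exfalso
    subst hd0
    haveI hsing : Subsingleton (Fin 0 → ℝ) := ⟨fun a b => funext fun i => i.elim0⟩
    obtain ⟨t₀, ht₀⟩ := hTne
    apply hnosing 0
    refine ⟨t₀, ?_⟩
    ext z
    constructor
    · intro _
      exact Subsingleton.elim z t₀
    · intro _
      exact ⟨(Subsingleton.elim t₀ z) ▸ ht₀, ⟨t₀, ht₀, Subsingleton.elim _ _⟩⟩
  -- the structure of the irreducible cut set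
  obtain ⟨U, V, hUV, hUne, hVne, hcUV, hUcV, hXeq⟩ := irredCutSet_structure hTclosed hX
  obtain ⟨⟨hXT, -⟩, hirr⟩ := hX
  have hXclosed : IsClosed X := by
    rw [hXeq]
    exact (isClosed_closure.inter isClosed_closure).inter hTclosed
  have hUTX : U ⊆ T \ X := hUV ▸ Set.subset_union_left
  have hVTX : V ⊆ T \ X := hUV ▸ Set.subset_union_right
  have hUT : U ⊆ T := fun y hy => (hUTX hy).1
  have hVT : V ⊆ T := fun y hy => (hVTX hy).1
  have hUX : ∀ y ∈ U, y ∉ X := fun y hy => (hUTX hy).2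
  have hVX : ∀ y ∈ V, y ∉ X := fun y hy => (hVTX hy).2
  have hUVdisj : ∀ y, y ∈ U → y ∈ V → False := fun y h1 h2 =>
    Set.eq_empty_iff_forall_notMem.1 hcUV y ⟨subset_closure h1, h2⟩
  refine ⟨hXclosed, ?_⟩
  intro x hxX
  by_contra hacc
  rw [accPt_iff_nhds] at hacc
  push_neg at hacc
  obtain ⟨O, hOnhds, hOiso⟩ := hacc
  obtain ⟨δ, hδ, hδO⟩ := Metric.mem_nhds_iff.1 hOnhds
  have hxT : x ∈ T := hXT hxX
  have hisoball : ∀ y ∈ X, y ∈ Metric.ball x δ → y = x := fun y hyX hyb =>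
    hOiso y ⟨hδO hyb, hyX⟩
  -- the case X = {x}
  by_cases hXx : X = {x}
  · refine absurd ⟨U, V, ?_, hUne, hVne, hcUV, hUcV⟩ (hcut x hxT)
    rw [← hXx]
    exact hUV
  -- X \ {x} is a proper closed subset of X
  have hX₀eq : X \ {x} = X \ Metric.ball x δ := by
    ext y
    constructor
    · rintro ⟨hyX, hyx⟩
      exact ⟨hyX, fun hyb => hyx (hisoball y hyX hyb)⟩
    · rintro ⟨hyX, hyb⟩
      refine ⟨hyX, fun h => ?_⟩
      rw [Set.mem_singleton_iff] at h
      exact hyb (h ▸ Metric.mem_ball_self hδ)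
  have hX₀closed : IsClosed (X \ {x}) := by
    rw [hX₀eq]
    exact hXclosed.sdiff Metric.isOpen_ball
  have hX₀ss : X \ {x} ⊂ X := ⟨Set.diff_subset, fun h => (h hxX).2 rfl⟩
  have hirrS : ¬ SepUnion (T \ (X \ {x})) :=
    hirr _ hX₀ss (by rw [hX₀closed.closure_eq]; exact Set.inter_subset_left)
  have hS : T \ (X \ {x}) = (U ∪ V) ∪ {x} := by
    ext y
    constructor
    · rintro ⟨hyT, hyn⟩
      by_cases hyX : y ∈ X
      · right
        by_contra hyx
        exact hyn ⟨hyX, fun h => hyx h⟩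
      · left
        rw [← hUV]
        exact ⟨hyT, hyX⟩
    · rintro (hy | hy)
      · rw [← hUV] at hy
        exact ⟨hy.1, fun h => hy.2 h.1⟩
      · rw [Set.mem_singleton_iff] at hy
        subst hy
        exact ⟨hxT, fun h => h.2 rfl⟩
  have hxclU : x ∈ closure U := by
    by_contra hxcl
    apply hirrS
    refine ⟨U, V ∪ {x}, by rw [hS, Set.union_assoc], hUne, ⟨x, Or.inr rfl⟩, ?_, ?_⟩
    · apply Set.eq_empty_iff_forall_notMem.2
      rintro y ⟨hyc, hyV | hyx⟩
      · exact Set.eq_empty_iff_forall_notMem.1 hcUV y ⟨hyc, hyV⟩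
      · rw [Set.mem_singleton_iff] at hyx
        subst hyx
        exact hxcl hyc
    · apply Set.eq_empty_iff_forall_notMem.2
      rintro y ⟨hyU, hyc⟩
      rw [closure_union, closure_singleton] at hyc
      rcases hyc with hyc | hyx
      · exact Set.eq_empty_iff_forall_notMem.1 hUcV y ⟨hyU, hyc⟩
      · rw [Set.mem_singleton_iff] at hyx
        subst hyx
        exact hUX _ hyU hxX
  have hxclV : x ∈ closure V := by
    by_contra hxcl
    apply hirrS
    refine ⟨U ∪ {x}, V, ?_, ⟨x, Or.inr rfl⟩, hVne, ?_, ?_⟩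
    · rw [hS]
      ext y
      simp only [Set.mem_union, Set.mem_singleton_iff]
      tauto
    · apply Set.eq_empty_iff_forall_notMem.2
      rintro y ⟨hyc, hyV⟩
      rw [closure_union, closure_singleton] at hyc
      rcases hyc with hyc | hyx
      · exact Set.eq_empty_iff_forall_notMem.1 hcUV y ⟨hyc, hyV⟩
      · rw [Set.mem_singleton_iff] at hyx
        subst hyx
        exact hVX _ hyV hxX
    · apply Set.eq_empty_iff_forall_notMem.2
      rintro y ⟨hyU | hyx, hyc⟩
      · exact Set.eq_empty_iff_forall_notMem.1 hUcV y ⟨hyU, hyc⟩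
      · rw [Set.mem_singleton_iff] at hyx
        subst hyx
        exact hxcl hyc
  -- geometric setup
  have hdetU : IsUnit (rmat A).det := rdet_unit A hE
  obtain ⟨R₀, hR₀⟩ := hTcomp.isBounded.subset_closedBall 0
  set R : ℝ := max R₀ 0 with hRdef
  have hR0 : 0 ≤ R := le_max_right _ _
  have hRT : ∀ t ∈ T, ‖t‖ ≤ R := by
    intro t ht
    have h1 := hR₀ ht
    rw [Metric.mem_closedBall, dist_zero_right] at h1
    exact le_trans h1 (le_max_left _ _)
  have hxnX₀ : x ∉ X \ {x} := fun h => h.2 rfl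
  obtain ⟨ε₁, hε₁, hball₁⟩ := Metric.isOpen_iff.1 hX₀closed.isOpen_compl x hxnX₀
  set ε' : ℝ := ε₁ / (4 * (R + 1)) with hε'def
  have hε'pos : 0 < ε' := by positivity
  obtain ⟨n, hn⟩ := contract_of_expanding hd A hE ε' hε'pos
  have hmem := tile_mem A hdetU hSA3 n
  set B : Matrix (Fin d) (Fin d) ℝ := (rmat A)⁻¹ ^ n with hBdef
  -- basic inverse identities
  have hAB1 : rmat A * (rmat A)⁻¹ = 1 := Matrix.mul_nonsing_inv _ hdetU
  have hBA1 : (rmat A)⁻¹ * rmat A = 1 := Matrix.nonsing_inv_mul _ hdetU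
  have hcomm : Commute (rmat A) ((rmat A)⁻¹) := by
    unfold Commute SemiconjBy
    rw [hAB1, hBA1]
  have hAnBn : (rmat A) ^ n * B = 1 := by rw [hBdef, ← hcomm.mul_pow, hAB1, one_pow]
  have hBnAn : B * (rmat A) ^ n = 1 := by rw [hBdef, ← hcomm.symm.mul_pow, hBA1, one_pow]
  have hABv : ∀ y : Fin d → ℝ, (rmat A) ^ n *ᵥ (B *ᵥ y) = y := fun y => by
    rw [Matrix.mulVec_mulVec, hAnBn, Matrix.one_mulVec]
  -- small tiles
  have htile_small : ∀ (v : Fin d → ℤ), ∀ t₁ ∈ T, ∀ t₂ ∈ T,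
      dist (B *ᵥ (t₁ + rvec v)) (B *ᵥ (t₂ + rvec v)) ≤ ε₁ / 2 := by
    intro v t₁ ht₁ t₂ ht₂
    have hsub : B *ᵥ (t₁ + rvec v) - B *ᵥ (t₂ + rvec v) = B *ᵥ (t₁ - t₂) := by
      rw [show B *ᵥ (t₁ + rvec v) - B *ᵥ (t₂ + rvec v)
          = (Matrix.mulVecLin B) (t₁ + rvec v) - (Matrix.mulVecLin B) (t₂ + rvec v) from rfl,
        ← map_sub]
      show B *ᵥ (t₁ + rvec v - (t₂ + rvec v)) = B *ᵥ (t₁ - t₂)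
      congr 1
      abel
    rw [dist_eq_norm, hsub]
    have h1 : ‖B *ᵥ (t₁ - t₂)‖ ≤ ε' * ‖t₁ - t₂‖ := hn _
    have h2 : ‖t₁ - t₂‖ ≤ 2 * R := by
      calc ‖t₁ - t₂‖ ≤ ‖t₁‖ + ‖t₂‖ := norm_sub_le _ _
      _ ≤ 2 * R := by
        have h3 := hRT t₁ ht₁
        have h4 := hRT t₂ ht₂
        linarith
    calc ‖B *ᵥ (t₁ - t₂)‖ ≤ ε' * (2 * R) :=
      le_trans h1 (mul_le_mul le_rfl h2 (norm_nonneg _) hε'pos.le)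
    _ ≤ ε₁ / 2 := by
      rw [hε'def, div_mul_eq_mul_div, div_le_div_iff₀ (by positivity) (by norm_num)]
      nlinarith
  -- tiles
  set tileF : (Fin d → ℤ) → Set (Fin d → ℝ) := fun v => (fun t => B *ᵥ (t + rvec v)) '' T
    with htileF
  have htileT : ∀ v ∈ Vset A D n, tileF v ⊆ T := by
    rintro v hv p ⟨t, ht, rfl⟩
    exact (hmem _).2 ⟨v, hv, t, ht, rfl⟩
  set Nx : Set (Fin d → ℤ) := {v | v ∈ Vset A D n ∧ x ∈ tileF v} with hNxdef
  set Mx : Set (Fin d → ℤ) :=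
    {v | v ∈ Vset A D n ∧ (tileF v ∩ Metric.closedBall x 1).Nonempty} with hMxdef
  have hMfin : Mx.Finite := by
    set L := LinearMap.toContinuousLinearMap (Matrix.mulVecLin ((rmat A) ^ n)) with hLdef
    apply Set.Finite.subset (finite_int_vec (‖L‖ * (‖x‖ + 1) + R))
    rintro v ⟨hvV, p, ⟨t, ht, rfl⟩, hp1⟩
    simp only [Set.mem_setOf_eq]
    have hrv : rvec v = (rmat A) ^ n *ᵥ (B *ᵥ (t + rvec v)) - t := by
      rw [hABv]
      abel
    rw [hrv]
    have hL1 : ‖(rmat A) ^ n *ᵥ (B *ᵥ (t + rvec v))‖ ≤ ‖L‖ * ‖B *ᵥ (t + rvec v)‖ :=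
      L.le_opNorm (B *ᵥ (t + rvec v))
    have hp : ‖B *ᵥ (t + rvec v)‖ ≤ ‖x‖ + 1 := by
      have hd1 : dist (B *ᵥ (t + rvec v)) x ≤ 1 := Metric.mem_closedBall.1 hp1
      have h5 : ‖B *ᵥ (t + rvec v)‖ = ‖x + (B *ᵥ (t + rvec v) - x)‖ := by
        congr 1
        abel
      rw [h5]
      refine le_trans (norm_add_le _ _) ?_
      rw [dist_eq_norm] at hd1
      linarith
    calc ‖(rmat A) ^ n *ᵥ (B *ᵥ (t + rvec v)) - t‖
        ≤ ‖(rmat A) ^ n *ᵥ (B *ᵥ (t + rvec v))‖ + ‖t‖ := norm_sub_le _ _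
      _ ≤ ‖L‖ * (‖x‖ + 1) + R := by
        have h3 := hRT t ht
        have h4 : ‖L‖ * ‖B *ᵥ (t + rvec v)‖ ≤ ‖L‖ * (‖x‖ + 1) :=
          mul_le_mul le_rfl hp (norm_nonneg _) (norm_nonneg _)
        linarith [le_trans hL1 h4]
  -- a safety radius around x
  set Z : Set (Fin d → ℝ) := ⋃ v ∈ Mx \ Nx, tileF v with hZdef
  have hZclosed : IsClosed Z := by
    apply Set.Finite.isClosed_biUnion (hMfin.subset Set.diff_subset)
    intro v _
    obtain ⟨g, hg⟩ := exists_tile_homeo A hdetU n v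
    have hgT : tileF v = g '' T := (Set.image_congr fun t _ => (hg t)).symm
    rw [hgT]
    exact (hTcomp.image g.continuous).isClosed
  have hxZ : x ∉ Z := by
    intro hx
    obtain ⟨v, hv, hxv⟩ := Set.mem_iUnion₂.1 hx
    exact hv.2 ⟨hv.1.1, hxv⟩
  obtain ⟨ρ₀, hρ₀, hρ₀b⟩ := Metric.isOpen_iff.1 hZclosed.isOpen_compl x hxZ
  set ρ : ℝ := min ρ₀ 1 with hρdef
  have hρpos : 0 < ρ := lt_min hρ₀ one_pos
  have hcover : ∀ p ∈ T, dist p x < ρ → ∃ v, v ∈ Nx ∧ p ∈ tileF v := by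
    intro p hp hdist
    obtain ⟨v, hvV, t, ht, rfl⟩ := (hmem p).1 hp
    have hpt : (B *ᵥ (t + rvec v)) ∈ tileF v := ⟨t, ht, rfl⟩
    have hvM : v ∈ Mx := ⟨hvV, ⟨_, hpt, Metric.mem_closedBall.2
      (le_trans hdist.le (min_le_right _ _))⟩⟩
    by_cases hvN : v ∈ Nx
    · exact ⟨v, hvN, hpt⟩
    · exfalso
      have hpZ : (B *ᵥ (t + rvec v)) ∈ Z := Set.mem_iUnion₂.2 ⟨v, ⟨hvM, hvN⟩, hpt⟩
      have hpb : (B *ᵥ (t + rvec v)) ∈ Metric.ball x ρ₀ :=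
        Metric.mem_ball.2 (lt_of_lt_of_le hdist (min_le_left _ _))
      exact (hρ₀b hpb) hpZ
  -- pick a tile on each side of the cut
  obtain ⟨u, huU, hud⟩ := Metric.mem_closure_iff.1 hxclU ρ hρpos
  obtain ⟨v₁, hv₁N, hutile⟩ := hcover u (hUT huU) (by rw [dist_comm]; exact hud)
  obtain ⟨w, hwV, hwd⟩ := Metric.mem_closure_iff.1 hxclV ρ hρpos
  obtain ⟨v₂, hv₂N, hwtile⟩ := hcover w (hVT hwV) (by rw [dist_comm]; exact hwd)
  -- tiles containing x lie in the ball of radius ε₁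
  have htileS : ∀ v ∈ Nx, ∀ p ∈ tileF v, p ∈ T ∧ p ∈ Metric.ball x ε₁ := by
    rintro v hv p hp
    refine ⟨htileT v hv.1 hp, ?_⟩
    obtain ⟨t, ht, rfl⟩ := hp
    obtain ⟨t₀, ht₀, hxeq⟩ := hv.2
    rw [Metric.mem_ball, ← hxeq]
    exact lt_of_le_of_lt (htile_small v t ht t₀ ht₀) (by linarith)
  have hsplit : ∀ v ∈ Nx, ∀ p ∈ tileF v, p ≠ x → p ∈ U ∪ V := by
    intro v hv p hp hpx
    obtain ⟨hpT, hpball⟩ := htileS v hv p hp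
    have h6 : p ∈ (U ∪ V) ∪ {x} := by
      rw [← hS]
      exact ⟨hpT, hball₁ hpball⟩
    rcases h6 with h | h
    · exact h
    · rw [Set.mem_singleton_iff] at h
      exact absurd h hpx
  -- a tile containing x cannot meet both sides
  have hside : ∀ v ∈ Nx, (tileF v ∩ U).Nonempty → (tileF v ∩ V).Nonempty → False := by
    intro v hv hUne' hVne'
    obtain ⟨g, hg⟩ := exists_tile_homeo A hdetU n v
    have hgT : g '' T = tileF v := Set.image_congr fun t _ => (hg t)
    have hxtile : x ∈ tileF v := hv.2
    obtain ⟨t, ht, hgt⟩ : x ∈ g '' T := hgT ▸ hxtile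
    have hyT : g.symm x ∈ T := by
      rw [← hgt, Homeomorph.symm_apply_apply]
      exact ht
    apply hcut (g.symm x) hyT
    apply sepUnion_of_image g
    have himg : g '' (T \ {g.symm x}) = tileF v \ {x} := by
      rw [Set.image_diff g.injective, Set.image_singleton, hgT, Homeomorph.apply_symm_apply]
    rw [himg]
    refine ⟨tileF v ∩ U, tileF v ∩ V, ?_, hUne', hVne', ?_, ?_⟩
    · ext p
      constructor
      · rintro ⟨hp, hpx⟩
        rcases hsplit v hv p hp (by simpa using hpx) with h | h
        · exact Or.inl ⟨hp, h⟩
        · exact Or.inr ⟨hp, h⟩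
      · rintro (⟨hp, hpU⟩ | ⟨hp, hpV⟩)
        · refine ⟨hp, fun hpx => ?_⟩
          rw [Set.mem_singleton_iff] at hpx
          subst hpx
          exact hUX _ hpU hxX
        · refine ⟨hp, fun hpx => ?_⟩
          rw [Set.mem_singleton_iff] at hpx
          subst hpx
          exact hVX _ hpV hxX
    · apply Set.eq_empty_iff_forall_notMem.2
      rintro p ⟨hpc, _, hpV⟩
      exact Set.eq_empty_iff_forall_notMem.1 hcUV p
        ⟨closure_mono Set.inter_subset_right hpc, hpV⟩
    · apply Set.eq_empty_iff_forall_notMem.2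
      rintro p ⟨⟨_, hpU⟩, hpc⟩
      exact Set.eq_empty_iff_forall_notMem.1 hUcV p
        ⟨hpU, closure_mono Set.inter_subset_right hpc⟩
  -- hence each of the two tiles is contained in one side
  have htile₁U : ∀ p ∈ tileF v₁, p ≠ x → p ∈ U := by
    intro p hp hpx
    rcases hsplit v₁ hv₁N p hp hpx with h | h
    · exact h
    · exact absurd (hside v₁ hv₁N ⟨u, hutile, huU⟩ ⟨p, hp, h⟩) not_false
  have htile₂V : ∀ p ∈ tileF v₂, p ≠ x → p ∈ V := by
    intro p hp hpx
    rcases hsplit v₂ hv₂N p hp hpx with h | h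
    · exact absurd (hside v₂ hv₂N ⟨p, hp, h⟩ ⟨w, hwtile, hwV⟩) not_false
    · exact h
  have hinter : tileF v₁ ∩ tileF v₂ = {x} := by
    ext p
    constructor
    · rintro ⟨hp1, hp2⟩
      rw [Set.mem_singleton_iff]
      by_contra hpx
      exact hUVdisj p (htile₁U p hp1 hpx) (htile₂V p hp2 hpx)
    · intro hp
      rw [Set.mem_singleton_iff] at hp
      subst hp
      exact ⟨hv₁N.2, hv₂N.2⟩
  -- blow up to a singleton intersection of lattice translates
  apply hnosing (v₂ - v₁)
  refine ⟨(rmat A) ^ n *ᵥ x - rvec v₁, ?_⟩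
  ext z
  simp only [Set.mem_inter_iff, Set.mem_singleton_iff]
  constructor
  · rintro ⟨hzT, hztr⟩
    obtain ⟨t, ht, htz⟩ := hztr
    have h1 : B *ᵥ (z + rvec v₁) ∈ tileF v₁ := ⟨z, hzT, rfl⟩
    have h2 : B *ᵥ (z + rvec v₁) ∈ tileF v₂ := by
      refine ⟨t, ht, ?_⟩
      show B *ᵥ (t + rvec v₂) = B *ᵥ (z + rvec v₁)
      congr 1
      rw [show z = t + rvec (v₂ - v₁) from htz.symm, rvec_sub]
      abel
    have h3 : B *ᵥ (z + rvec v₁) = x := by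
      have h7 : B *ᵥ (z + rvec v₁) ∈ ({x} : Set (Fin d → ℝ)) := by
        rw [← hinter]
        exact ⟨h1, h2⟩
      exact Set.mem_singleton_iff.1 h7
    have h4 : z + rvec v₁ = (rmat A) ^ n *ᵥ x := by
      rw [← h3, hABv]
    rw [← h4]
    abel
  · rintro rfl
    obtain ⟨t₁, ht₁, hxe₁⟩ := hv₁N.2
    obtain ⟨t₂, ht₂, hxe₂⟩ := hv₂N.2
    have he₁ : t₁ + rvec v₁ = (rmat A) ^ n *ᵥ x := by
      rw [show x = B *ᵥ (t₁ + rvec v₁) from hxe₁.symm, hABv]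
    have he₂ : t₂ + rvec v₂ = (rmat A) ^ n *ᵥ x := by
      rw [show x = B *ᵥ (t₂ + rvec v₂) from hxe₂.symm, hABv]
    constructor
    · have h8 : (rmat A) ^ n *ᵥ x - rvec v₁ = t₁ := by
        rw [← he₁]
        abel
      rw [h8]
      exact ht₁
    · refine ⟨t₂, ht₂, ?_⟩
      show t₂ + rvec (v₂ - v₁) = (rmat A) ^ n *ᵥ x - rvec v₁
      rw [rvec_sub, ← he₂]
      abel
end
end

section
/- (Cut points of ℤ^d-tiles.) Let T be a connected ℤ^d-tile T(A,D) with Hata graphs G_n = (V_n, E_n), and let n₀ ≥ 1. Suppose that for each n ≥ n₀ there is a partition V_n = W₁^(n) ∪ W₂^(n) ∪ W₃^(n) into pairwise disjoint nonempty sets satisfying: (i) the subgraph of G_n induced on W₂^(n) is connected, and W₂^(n) separates G_n between W₁^(n) and W₃^(n) (i.e., (T+v) ∩ (T+v') = ∅ for all v ∈ W₁^(n), v' ∈ W₃^(n)); (ii) W₁^(n+1) ⊆ C(W₁^(n)) ∪ C(W₂^(n)), W₂^(n+1) ⊆ C(W₂^(n)), and W₃^(n+1) ⊆ C(W₃^(n))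 ∪ C(W₂^(n)); (iii) there is an integer K with #W₂^(n) ≤ K for all n ≥ n₀. Then ⋂_{n≥n₀} X_n(W₂^(n)) consists of a single point z, and z is a cut point of T (i.e., T \ {z} is disconnected). -/
open Set Filter Topology Matrix

noncomputable section

attribute [local instance] Matrix.linftyOpNormedRing Matrix.linftyOpNormedAlgebra

namespace AuxCut

lemma map_mul' {d : ℕ} (M N : Matrix (Fin d) (Fin d) ℝ) :
    (M * N).map (Complex.ofReal : ℝ → ℂ) = M.map Complex.ofReal * N.map Complex.ofReal := by
  ext i j
  simp [Matrix.mul_apply, Matrix.map_apply]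

lemma map_one' {d : ℕ} :
    (1 : Matrix (Fin d) (Fin d) ℝ).map (Complex.ofReal : ℝ → ℂ) = 1 := by
  ext i j; by_cases h : i = j <;> simp [h, Matrix.one_apply]

lemma map_inv_comm {d : ℕ} (M : Matrix (Fin d) (Fin d) ℝ) (hdet : IsUnit M.det) :
    (M.map (Complex.ofReal : ℝ → ℂ))⁻¹ = M⁻¹.map Complex.ofReal := by
  have h1 : (M⁻¹.map (Complex.ofReal : ℝ → ℂ)) * (M.map Complex.ofReal) = 1 := by
    rw [← map_mul', Matrix.nonsing_inv_mul M hdet, map_one']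
  exact Matrix.inv_eq_left_inv h1

lemma map_pow_comm {d : ℕ} (M : Matrix (Fin d) (Fin d) ℝ) (n : ℕ) :
    (M ^ n).map (Complex.ofReal : ℝ → ℂ) = (M.map Complex.ofReal) ^ n := by
  induction n with
  | zero => simp [map_one']
  | succ n ih => rw [pow_succ, map_mul', ih, pow_succ]

/-- complexification of a real vector -/
def cvec {d : ℕ} (x : Fin d → ℝ) : Fin d → ℂ := fun i => (x i : ℂ)

lemma cvec_mulVec {d : ℕ} (M : Matrix (Fin d) (Fin d) ℝ) (x : Fin d → ℝ) :
    cvec (M *ᵥ x) = (M.map (Complex.ofReal : ℝ → ℂ)) *ᵥ cvec x := by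
  funext i
  simp [cvec, Matrix.mulVec, dotProduct, Matrix.map]

lemma cvec_norm {d : ℕ} (x : Fin d → ℝ) : ‖cvec x‖ = ‖x‖ := by
  simp only [Pi.norm_def]
  congr 1
  apply Finset.sup_congr rfl
  intro i _
  simp [cvec]

lemma mulVec_norm_le {d : ℕ} (M : Matrix (Fin d) (Fin d) ℝ) (x : Fin d → ℝ) :
    ‖M *ᵥ x‖ ≤ ‖M.map (Complex.ofReal : ℝ → ℂ)‖ * ‖x‖ := by
  rw [← cvec_norm (M *ᵥ x), cvec_mulVec, ← cvec_norm x]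
  exact Matrix.linfty_opNorm_mulVec _ _

lemma mulVec_lipschitz {d : ℕ} (M : Matrix (Fin d) (Fin d) ℝ) :
    LipschitzWith ‖M.map (Complex.ofReal : ℝ → ℂ)‖₊ (fun x => M *ᵥ x) := by
  apply LipschitzWith.of_dist_le_mul
  intro x y
  have h2 : M *ᵥ x - M *ᵥ y = M *ᵥ (x - y) := (Matrix.mulVec_sub M x y).symm
  rw [dist_eq_norm, dist_eq_norm, h2, coe_nnnorm]
  exact mulVec_norm_le M (x - y)

lemma tendsto_norm_pow_of_spectralRadius_lt_one {d : ℕ}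
    (M : Matrix (Fin d) (Fin d) ℂ) (h : spectralRadius ℂ M < 1) :
    Tendsto (fun n : ℕ => ‖M ^ n‖) atTop (𝓝 0) := by
  obtain ⟨r, hr1, hr2⟩ := exists_between h
  lift r to NNReal using (hr2.trans ENNReal.one_lt_top).ne
  have hr2' : r < 1 := by exact_mod_cast hr2
  have hg := spectrum.pow_nnnorm_pow_one_div_tendsto_nhds_spectralRadius M
  have hev : ∀ᶠ n : ℕ in atTop, (‖M ^ n‖₊ : ENNReal) ^ (1 / (n : ℝ)) < r :=
    hg.eventually_lt_const hr1
  have key : ∀ᶠ n : ℕ in atTop, ‖M ^ n‖ ≤ (r : ℝ) ^ n := by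
    filter_upwards [hev, eventually_gt_atTop 0] with n hn hn0
    have hnn : (0:ℝ) < (n:ℝ) := by exact_mod_cast hn0
    have h2 := ENNReal.rpow_le_rpow hn.le (by positivity : (0:ℝ) ≤ (n:ℝ))
    rw [← ENNReal.rpow_mul, one_div, inv_mul_cancel₀ hnn.ne', ENNReal.rpow_one,
      ENNReal.rpow_natCast] at h2
    have h3 : ‖M ^ n‖₊ ≤ r ^ n := by exact_mod_cast h2
    calc ‖M ^ n‖ = ((‖M ^ n‖₊ : NNReal) : ℝ) := rfl
      _ ≤ ((r ^ n : NNReal) : ℝ) := by exact_mod_cast h3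
      _ = (r : ℝ) ^ n := by push_cast; ring
  have hgeo : Tendsto (fun n : ℕ => (r:ℝ) ^ n) atTop (𝓝 0) :=
    tendsto_pow_atTop_nhds_zero_of_lt_one (by positivity) (by exact_mod_cast hr2')
  exact squeeze_zero' (Eventually.of_forall fun n => norm_nonneg _) key hgeo

lemma spectralRadius_lt_one' {d : ℕ} (M : Matrix (Fin d) (Fin d) ℂ)
    (h : ∀ μ ∈ spectrum ℂ M, ‖μ‖₊ < 1) : spectralRadius ℂ M < 1 := by
  rcases (spectrum ℂ M).eq_empty_or_nonempty with he | hne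
  · rw [spectralRadius, he]; simp
  · obtain ⟨k, hk, hke⟩ := spectrum.exists_nnnorm_eq_spectralRadius_of_nonempty hne
    rw [← hke]; exact_mod_cast h k hk

lemma spec_inv_small {d : ℕ} (M : Matrix (Fin d) (Fin d) ℂ) (hdet : IsUnit M.det)
    (hexp : ∀ μ : ℂ, Module.End.HasEigenvalue (Matrix.toLin' M) μ → 1 < ‖μ‖) :
    ∀ μ ∈ spectrum ℂ M⁻¹, ‖μ‖₊ < 1 := by
  intro μ hμ
  have hu : IsUnit M := (Matrix.isUnit_iff_isUnit_det M).2 hdet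
  obtain ⟨u, hu⟩ := hu
  have hinv : (M⁻¹ : Matrix (Fin d) (Fin d) ℂ) = ↑u⁻¹ := by rw [Matrix.coe_units_inv, hu]
  have hμ0 : μ ≠ 0 := by
    rintro rfl
    rw [hinv] at hμ
    exact (spectrum.zero_mem_iff ℂ).mp hμ u⁻¹.isUnit
  have hmem : μ⁻¹ ∈ spectrum ℂ M := by
    have := (spectrum.inv_mem_iff (r := (Units.mk0 μ hμ0)⁻¹) (a := u)).mpr ?_
    · simpa [hu, Units.val_inv_eq_inv_val] using this
    · rw [inv_inv]
      show μ ∈ spectrum ℂ ((↑u⁻¹ : Matrix (Fin d) (Fin d) ℂ))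
      rwa [← hinv]
  have heig : Module.End.HasEigenvalue (Matrix.toLin' M) μ⁻¹ := by
    rw [Module.End.hasEigenvalue_iff_mem_spectrum]
    have h2 : spectrum ℂ (Matrix.toLinAlgEquiv' M) = spectrum ℂ M := AlgEquiv.spectrum_eq _ _
    rw [show Matrix.toLin' M = Matrix.toLinAlgEquiv' M from rfl, h2]
    exact hmem
  have h1 := hexp _ heig
  rw [norm_inv] at h1
  have h4 : ‖μ‖ < 1 := by
    rcases lt_or_ge (‖μ‖) 1 with h | h
    · exact h
    · exfalso
      have : (‖μ‖)⁻¹ ≤ 1 := inv_le_one_of_one_le₀ h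
      linarith
  simpa [← NNReal.coe_lt_one] using h4

lemma cmat_eq {d : ℕ} (A : Matrix (Fin d) (Fin d) ℤ) :
    (rmat A).map (Complex.ofReal : ℝ → ℂ) = A.map (Int.cast : ℤ → ℂ) := by
  ext i j; simp [rmat, Matrix.map_apply]

lemma det_isUnit {d : ℕ} (A : Matrix (Fin d) (Fin d) ℤ) (hexp : Expanding A) :
    IsUnit (rmat A).det := by
  set Ac := A.map (Int.cast : ℤ → ℂ) with hAc
  have hdet : Ac.det ≠ 0 := by
    intro h
    obtain ⟨v, hv0, hv⟩ := (Matrix.exists_mulVec_eq_zero_iff).mpr h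
    have heig : Module.End.HasEigenvalue (Matrix.toLin' Ac) 0 := by
      apply Module.End.hasEigenvalue_of_hasEigenvector (x := v)
      rw [Module.End.hasEigenvector_iff]
      refine ⟨?_, hv0⟩
      rw [Module.End.mem_eigenspace_iff]
      simpa [Matrix.toLin'_apply] using hv
    have := hexp 0 heig
    norm_num at this
  have : (rmat A).det ≠ 0 := by
    intro h
    apply hdet
    have : Ac.det = ((rmat A).det : ℂ) := by
      rw [hAc, ← cmat_eq]
      exact (RingHom.map_det (Complex.ofRealHom) (rmat A)).symm
    rw [this, h]; simp
  exact isUnit_iff_ne_zero.mpr this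

/-- the final spectral conclusion: norms of powers of the inverse tend to 0 -/
lemma tendsto_inv_pow_norm {d : ℕ} (A : Matrix (Fin d) (Fin d) ℤ) (hexp : Expanding A) :
    Tendsto (fun n : ℕ => ‖((rmat A)⁻¹.map (Complex.ofReal : ℝ → ℂ)) ^ n‖) atTop (𝓝 0) := by
  have hdet := det_isUnit A hexp
  have hMc : (rmat A)⁻¹.map (Complex.ofReal : ℝ → ℂ) = (A.map (Int.cast : ℤ → ℂ))⁻¹ := by
    rw [← cmat_eq, map_inv_comm _ hdet]
  have hdetc : IsUnit (A.map (Int.cast : ℤ → ℂ)).det := by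
    have h : (A.map (Int.cast : ℤ → ℂ)).det = ((rmat A).det : ℂ) := by
      rw [← cmat_eq]
      exact (RingHom.map_det (Complex.ofRealHom) (rmat A)).symm
    rw [h]
    exact isUnit_iff_ne_zero.mpr (by exact_mod_cast hdet.ne_zero)
  rw [hMc]
  apply tendsto_norm_pow_of_spectralRadius_lt_one
  apply spectralRadius_lt_one'
  apply spec_inv_small _ hdetc
  intro μ h
  exact hexp μ h

end AuxCut
namespace AuxCut

variable {ι X : Type*} [PseudoEMetricSpace X]

open Relation SimpleGraph

/-- intersection graph on `W` -/
def igraph (W : Set ι) (P : ι → Set X) : SimpleGraph ι where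
  Adj a b := a ≠ b ∧ a ∈ W ∧ b ∈ W ∧ (P a ∩ P b).Nonempty
  symm := ⟨by
    rintro a b ⟨h1, h2, h3, h4⟩
    exact ⟨h1.symm, h3, h2, by rwa [Set.inter_comm]⟩⟩
  loopless := ⟨fun a h => h.1 rfl⟩

lemma igraph_support_mem {W : Set ι} {P : ι → Set X} :
    ∀ {a b : ι} (q : (igraph W P).Walk a b), a ∈ W → ∀ s ∈ q.support, s ∈ W := by
  intro a b q
  induction q with
  | nil => intro ha s hs; simp at hs; rwa [hs]
  | cons h q ih =>
    intro ha s hs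
    rw [SimpleGraph.Walk.support_cons] at hs
    rcases List.mem_cons.mp hs with rfl | hs
    · exact ha
    · exact ih h.2.2.1 s hs

lemma igraph_edist {W : Set ι} {P : ι → Set X} {ε : ENNReal}
    (hdiam : ∀ i ∈ W, EMetric.diam (P i) ≤ ε) :
    ∀ {a b : ι} (q : (igraph W P).Walk a b), a ∈ W →
      ∀ x ∈ P a, ∀ y ∈ P b, edist x y ≤ q.support.length * ε := by
  intro a b q
  induction q with
  | nil =>
    intro ha x hx y hy
    simp only [SimpleGraph.Walk.support_nil, List.length_singleton, Nat.cast_one, one_mul]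
    exact le_trans (EMetric.edist_le_diam_of_mem hx hy) (hdiam _ ha)
  | @cons a c b h q ih =>
    intro ha x hx y hy
    obtain ⟨t, ht1, ht2⟩ := h.2.2.2
    rw [SimpleGraph.Walk.support_cons, List.length_cons]
    push_cast
    calc edist x y ≤ edist x t + edist t y := edist_triangle _ _ _
      _ ≤ ε + q.support.length * ε := by
          gcongr
          · exact le_trans (EMetric.edist_le_diam_of_mem hx ht1) (hdiam _ ha)
          · exact ih h.2.2.1 t ht2 y hy
      _ = ((q.support.length : ENNReal) + 1) * ε := by rw [add_mul, one_mul, add_comm]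

lemma rtg_reachable {W : Set ι} {P : ι → Set X} {v w : ι}
    (h : Relation.ReflTransGen (fun a b => a ∈ W ∧ b ∈ W ∧ (P a ∩ P b).Nonempty) v w) :
    (igraph W P).Reachable v w := by
  induction h with
  | refl => exact SimpleGraph.Reachable.refl v
  | @tail b c hab hbc ih =>
    rcases eq_or_ne b c with rfl | hne
    · exact ih
    · exact ih.trans (SimpleGraph.Adj.reachable ⟨hne, hbc⟩)

/-- Main chain-diameter lemma. -/
lemma chain_edist {W : Set ι} (hfin : W.Finite) {P : ι → Set X} {ε : ENNReal}
    (hdiam : ∀ i ∈ W, EMetric.diam (P i) ≤ ε) {v w : ι} (hv : v ∈ W)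
    (h : Relation.ReflTransGen (fun a b => a ∈ W ∧ b ∈ W ∧ (P a ∩ P b).Nonempty) v w)
    {x y : X} (hx : x ∈ P v) (hy : y ∈ P w) :
    edist x y ≤ (hfin.toFinset.card : ENNReal) * ε := by
  classical
  have hreach : (igraph W P).Reachable v w := rtg_reachable h
  obtain ⟨q⟩ := hreach
  set p := q.toPath with hp
  have hlen : p.1.support.length ≤ hfin.toFinset.card := by
    have hnodup : p.1.support.Nodup := p.2.support_nodup
    have hsub : p.1.support.toFinset ⊆ hfin.toFinset := by
      intro s hs
      rw [List.mem_toFinset] at hs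
      rw [Set.Finite.mem_toFinset]
      exact igraph_support_mem p.1 hv s hs
    calc p.1.support.length = p.1.support.toFinset.card := (List.toFinset_card_of_nodup hnodup).symm
      _ ≤ hfin.toFinset.card := Finset.card_le_card hsub
  calc edist x y ≤ (p.1.support.length : ENNReal) * ε := igraph_edist hdiam p.1 hv x hx y hy
    _ ≤ (hfin.toFinset.card : ENNReal) * ε := mul_le_mul_left (by exact_mod_cast hlen) ε

end AuxCut
namespace AuxCut

variable {d : ℕ} (A : Matrix (Fin d) (Fin d) ℤ) (D : Set (Fin d → ℤ)) (T : Set (Fin d → ℝ))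

lemma rvec_add (v w : Fin d → ℤ) : rvec (v + w) = rvec v + rvec w := by
  funext i; simp [rvec]

lemma rvec_zero : rvec (0 : Fin d → ℤ) = 0 := by funext i; simp [rvec]

lemma rvec_mulVec (u : Fin d → ℤ) : rvec (A *ᵥ u) = (rmat A) *ᵥ (rvec u) := by
  funext i
  simp [rvec, rmat, Matrix.mulVec, dotProduct]

/-- the basic piece `A^{-n}(T+v)` -/
def piece (n : ℕ) (v : Fin d → ℤ) : Set (Fin d → ℝ) :=
  ((rmat A)⁻¹ ^ n).mulVec '' trT T v

lemma XnSet_eq (n : ℕ) (W : Set (Fin d → ℤ)) :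
    XnSet A T n W = ⋃ v ∈ W, piece A T n v := rfl

variable {A D T}

lemma mulVec_inv_pow_leftinv (hdet : IsUnit (rmat A).det) (n : ℕ) (x : Fin d → ℝ) :
    (rmat A ^ n) *ᵥ (((rmat A)⁻¹ ^ n) *ᵥ x) = x := by
  rw [Matrix.mulVec_mulVec]
  have hc : rmat A * (rmat A)⁻¹ = 1 := Matrix.mul_nonsing_inv _ hdet
  have hc' : (rmat A)⁻¹ * rmat A = 1 := Matrix.nonsing_inv_mul _ hdet
  have hcm : Commute (rmat A) ((rmat A)⁻¹) := by rw [Commute, SemiconjBy, hc, hc']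
  rw [← hcm.mul_pow, hc, one_pow, Matrix.one_mulVec]

lemma mulVec_inv_pow_injective (hdet : IsUnit (rmat A).det) (n : ℕ) :
    Function.Injective (((rmat A)⁻¹ ^ n).mulVec) := by
  intro x y h
  have := congrArg ((rmat A ^ n).mulVec) h
  rwa [mulVec_inv_pow_leftinv hdet, mulVec_inv_pow_leftinv hdet] at this

lemma key_union (hdet : IsUnit (rmat A).det) (hSA : SelfAffine A D T) : ⋃ e ∈ D, (rmat A)⁻¹.mulVec '' trT T e = T := by
  have h := hSA.2.2
  have h2 := congrArg (Set.image ((rmat A)⁻¹.mulVec)) h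
  rw [Set.image_image] at h2
  have h3 : (fun x => (rmat A)⁻¹ *ᵥ (rmat A *ᵥ x)) '' T = T := by
    have : (fun x : Fin d → ℝ => (rmat A)⁻¹ *ᵥ (rmat A *ᵥ x)) = id := by
      funext x
      rw [Matrix.mulVec_mulVec, Matrix.nonsing_inv_mul _ hdet, Matrix.one_mulVec]; rfl
    rw [this, Set.image_id]
  rw [h3] at h2
  have h4 : (rmat A)⁻¹.mulVec '' (⋃ e ∈ D, (fun x => x + rvec e) '' T)
      = ⋃ e ∈ D, (rmat A)⁻¹.mulVec '' trT T e := by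
    rw [Set.image_iUnion₂]; rfl
  rw [← h4]
  exact h2.symm

lemma piece_succ (hdet : IsUnit (rmat A).det) (n : ℕ) (u e : Fin d → ℤ) :
    piece A T (n+1) (A *ᵥ u + e) =
      ((rmat A)⁻¹ ^ n).mulVec '' ((fun y => y + rvec u) ''
        ((rmat A)⁻¹.mulVec '' trT T e)) := by
  have hcomp : ∀ x : Fin d → ℝ,
      ((rmat A)⁻¹ ^ (n+1)) *ᵥ (x + rvec (A *ᵥ u + e)) =
      ((rmat A)⁻¹ ^ n) *ᵥ (((rmat A)⁻¹ *ᵥ (x + rvec e)) + rvec u) := by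
    intro x
    rw [pow_succ, ← Matrix.mulVec_mulVec, rvec_add, rvec_mulVec]
    congr 1
    rw [show x + ((rmat A) *ᵥ rvec u + rvec e) = (x + rvec e) + (rmat A) *ᵥ rvec u by ring,
      Matrix.mulVec_add, Matrix.mulVec_mulVec, Matrix.nonsing_inv_mul _ hdet,
      Matrix.one_mulVec]
  unfold piece trT
  simp only [Set.image_image]
  exact Set.image_congr fun x _ => hcomp x

lemma union_piece_succ (hdet : IsUnit (rmat A).det) (hSA : SelfAffine A D T) (n : ℕ) (u : Fin d → ℤ) :
    ⋃ e ∈ D, piece A T (n+1) (A *ᵥ u + e) = piece A T n u := by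
  have : ⋃ e ∈ D, piece A T (n+1) (A *ᵥ u + e)
      = ((rmat A)⁻¹ ^ n).mulVec '' ((fun y => y + rvec u) ''
          (⋃ e ∈ D, (rmat A)⁻¹.mulVec '' trT T e)) := by
    rw [Set.image_iUnion₂, Set.image_iUnion₂ (f := ((rmat A)⁻¹ ^ n).mulVec)]
    exact Set.iUnion₂_congr fun e he => piece_succ hdet n u e
  rw [this, key_union hdet hSA]
  rfl

lemma XnSet_mono_child (hdet : IsUnit (rmat A).det) (hSA : SelfAffine A D T) {n : ℕ} {W W' : Set (Fin d → ℤ)} (h : W' ⊆ childSet A D W) :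
    XnSet A T (n+1) W' ⊆ XnSet A T n W := by
  intro x hx
  rw [XnSet_eq, Set.mem_iUnion₂] at hx
  obtain ⟨v', hv', hx⟩ := hx
  obtain ⟨u, hu, e, he, rfl⟩ := h hv'
  rw [XnSet_eq, Set.mem_iUnion₂]
  refine ⟨u, hu, ?_⟩
  rw [← union_piece_succ hdet hSA n u]
  exact Set.mem_biUnion he hx

lemma XnSet_child_eq (hdet : IsUnit (rmat A).det) (hSA : SelfAffine A D T) (n : ℕ) (W : Set (Fin d → ℤ)) :
    XnSet A T (n+1) (childSet A D W) = XnSet A T n W := by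
  apply Set.Subset.antisymm (XnSet_mono_child hdet hSA subset_rfl)
  intro x hx
  rw [XnSet_eq, Set.mem_iUnion₂] at hx
  obtain ⟨u, hu, hx⟩ := hx
  rw [← union_piece_succ hdet hSA n u, Set.mem_iUnion₂] at hx
  obtain ⟨e, he, hx⟩ := hx
  rw [XnSet_eq, Set.mem_iUnion₂]
  exact ⟨A *ᵥ u + e, ⟨u, hu, e, he, rfl⟩, hx⟩

lemma XnSet_union (n : ℕ) (W W' : Set (Fin d → ℤ)) :
    XnSet A T n (W ∪ W') = XnSet A T n W ∪ XnSet A T n W' := by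
  simp only [XnSet]
  exact Set.biUnion_union W W' _

lemma XnSet_subset (n : ℕ) {W W' : Set (Fin d → ℤ)} (h : W ⊆ W') :
    XnSet A T n W ⊆ XnSet A T n W' :=
  Set.biUnion_subset_biUnion_left h

lemma Vset_zero : Vset A D 0 = {0} := by
  ext v
  constructor
  · rintro ⟨dig, hdig, rfl⟩
    simp
  · rintro rfl
    exact ⟨Fin.elim0, fun k => k.elim0, by simp⟩

lemma Vset_succ (n : ℕ) : Vset A D (n + 1) = childSet A D (Vset A D n) := by
  ext v
  constructor
  · rintro ⟨dig, hdig, rfl⟩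
    refine ⟨∑ k : Fin n, (A ^ (k : ℕ)) *ᵥ (dig k.succ), ⟨fun k => dig k.succ, fun k => hdig _, rfl⟩,
      dig 0, hdig 0, ?_⟩
    rw [Fin.sum_univ_succ]
    have h1 : (A ^ ((0 : Fin (n+1)) : ℕ)) *ᵥ (dig 0) = dig 0 := by
      simp [Matrix.one_mulVec]
    have h2 : ∀ k : Fin n, (A ^ ((k.succ : Fin (n+1)) : ℕ)) *ᵥ (dig k.succ)
        = A *ᵥ ((A ^ (k : ℕ)) *ᵥ (dig k.succ)) := by
      intro k
      rw [Matrix.mulVec_mulVec, ← pow_succ']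
      rfl
    rw [h1]
    have h3 : ∑ k : Fin n, (A ^ ((k.succ : Fin (n+1)) : ℕ)) *ᵥ (dig k.succ)
        = A *ᵥ (∑ k : Fin n, (A ^ (k : ℕ)) *ᵥ (dig k.succ)) := by
      rw [Finset.sum_congr rfl fun k _ => h2 k]
      exact (map_sum (Matrix.mulVecLin A) _ _).symm
    rw [h3, add_comm]
  · rintro ⟨u, ⟨dig', hdig', rfl⟩, e, he, rfl⟩
    refine ⟨Fin.cases e dig', fun k => ?_, ?_⟩
    · refine Fin.cases he (fun i => hdig' i) k
    · rw [Fin.sum_univ_succ]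
      simp only [Fin.cases_zero, Fin.cases_succ]
      have h1 : (A ^ ((0 : Fin (n+1)) : ℕ)) *ᵥ e = e := by simp [Matrix.one_mulVec]
      have h2 : ∀ k : Fin n, (A ^ ((k.succ : Fin (n+1)) : ℕ)) *ᵥ (dig' k)
          = A *ᵥ ((A ^ (k : ℕ)) *ᵥ (dig' k)) := by
        intro k
        rw [Matrix.mulVec_mulVec, ← pow_succ']
        rfl
      have h3 : ∑ k : Fin n, (A ^ ((k.succ : Fin (n+1)) : ℕ)) *ᵥ (dig' k)
          = A *ᵥ (∑ k : Fin n, (A ^ (k : ℕ)) *ᵥ (dig' k)) := by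
        rw [Finset.sum_congr rfl fun k _ => h2 k]
        exact (map_sum (Matrix.mulVecLin A) _ _).symm
      rw [h1, h3, add_comm]

lemma childSet_finite {U : Set (Fin d → ℤ)} (hU : U.Finite) (hD : D.Finite) :
    (childSet A D U).Finite := by
  have : childSet A D U = Set.image2 (fun u e => A *ᵥ u + e) U D := by
    ext w
    simp only [childSet, Set.mem_setOf_eq, Set.mem_image2]
    constructor
    · rintro ⟨u, hu, e, he, rfl⟩; exact ⟨u, hu, e, he, rfl⟩
    · rintro ⟨u, hu, e, he, rfl⟩; exact ⟨u, hu, e, he, rfl⟩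
  rw [this]
  exact Set.Finite.image2 _ hU hD

lemma Vset_finite (hD : D.Finite) (n : ℕ) : (Vset A D n).Finite := by
  induction n with
  | zero => rw [Vset_zero]; exact Set.finite_singleton _
  | succ n ih => rw [Vset_succ]; exact childSet_finite ih hD

end AuxCut
namespace AuxCut

variable {d : ℕ} {A : Matrix (Fin d) (Fin d) ℤ} {D : Set (Fin d → ℤ)} {T : Set (Fin d → ℝ)}

lemma continuous_mulVec (M : Matrix (Fin d) (Fin d) ℝ) : Continuous M.mulVec :=
  (mulVec_lipschitz M).continuous

lemma trT_compact (hT : IsCompact T) (v : Fin d → ℤ) : IsCompact (trT T v) :=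
  hT.image (continuous_id.add continuous_const)

lemma trT_nonempty (hT : T.Nonempty) (v : Fin d → ℤ) : (trT T v).Nonempty :=
  hT.image _

lemma piece_compact (hT : IsCompact T) (n : ℕ) (v : Fin d → ℤ) :
    IsCompact (piece A T n v) :=
  (trT_compact hT v).image (continuous_mulVec _)

lemma XnSet_compact (hT : IsCompact T) {W : Set (Fin d → ℤ)} (hW : W.Finite) (n : ℕ) :
    IsCompact (XnSet A T n W) :=
  hW.isCompact_biUnion fun v _ => piece_compact hT n v

lemma XnSet_closed (hT : IsCompact T) {W : Set (Fin d → ℤ)} (hW : W.Finite) (n : ℕ) :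
    IsClosed (XnSet A T n W) :=
  (XnSet_compact hT hW n).isClosed

lemma XnSet_nonempty (hT : T.Nonempty) {W : Set (Fin d → ℤ)} (hW : W.Nonempty) (n : ℕ) :
    (XnSet A T n W).Nonempty := by
  obtain ⟨v, hv⟩ := hW
  obtain ⟨t, ht⟩ := hT
  exact ⟨((rmat A)⁻¹ ^ n) *ᵥ (t + rvec v),
    Set.mem_biUnion hv ⟨t + rvec v, ⟨t, ht, rfl⟩, rfl⟩⟩

lemma trT_zero : trT T 0 = T := by
  unfold trT
  rw [rvec_zero]
  simp

lemma XnSet_Vset (hdet : IsUnit (rmat A).det) (hSA : SelfAffine A D T) (n : ℕ) :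
    XnSet A T n (Vset A D n) = T := by
  induction n with
  | zero =>
    rw [Vset_zero]
    show ⋃ v ∈ ({0} : Set (Fin d → ℤ)), ((rmat A)⁻¹ ^ 0).mulVec '' trT T v = T
    rw [Set.biUnion_singleton, trT_zero, pow_zero]
    have : (1 : Matrix (Fin d) (Fin d) ℝ).mulVec = id := by
      funext x; exact Matrix.one_mulVec x
    rw [this, Set.image_id]
  | succ n ih =>
    rw [Vset_succ, XnSet_child_eq hdet hSA, ih]

lemma XnSet_subset_T (hdet : IsUnit (rmat A).det) (hSA : SelfAffine A D T)
    {W : Set (Fin d → ℤ)} {n : ℕ} (hW : W ⊆ Vset A D n) : XnSet A T n W ⊆ T := by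
  calc XnSet A T n W ⊆ XnSet A T n (Vset A D n) := XnSet_subset n hW
    _ = T := XnSet_Vset hdet hSA n

lemma piece_disjoint (hdet : IsUnit (rmat A).det) {v v' : Fin d → ℤ}
    (h : trT T v ∩ trT T v' = ∅) (n : ℕ) : piece A T n v ∩ piece A T n v' = ∅ := by
  unfold piece
  rw [← Set.image_inter (mulVec_inv_pow_injective hdet n), h, Set.image_empty]

lemma XnSet_disjoint (hdet : IsUnit (rmat A).det) {W W' : Set (Fin d → ℤ)} {n : ℕ}
    (hsep : ∀ v ∈ W, ∀ v' ∈ W', trT T v ∩ trT T v' = ∅) :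
    XnSet A T n W ∩ XnSet A T n W' = ∅ := by
  rw [Set.eq_empty_iff_forall_notMem]
  rintro x ⟨hx1, hx2⟩
  rw [XnSet_eq, Set.mem_iUnion₂] at hx1 hx2
  obtain ⟨v, hv, hx1⟩ := hx1
  obtain ⟨v', hv', hx2⟩ := hx2
  have := piece_disjoint (T := T) hdet (hsep v hv v' hv') n
  rw [Set.eq_empty_iff_forall_notMem] at this
  exact this x ⟨hx1, hx2⟩

lemma diam_trT (v : Fin d → ℤ) : EMetric.diam (trT T v) = EMetric.diam T := by
  apply Isometry.ediam_image
  intro x y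
  exact edist_add_right x y (rvec v)

lemma diam_piece_le (n : ℕ) (v : Fin d → ℤ) :
    EMetric.diam (piece A T n v) ≤
      ‖((rmat A)⁻¹.map (Complex.ofReal : ℝ → ℂ)) ^ n‖₊ * EMetric.diam T := by
  have h := (mulVec_lipschitz ((rmat A)⁻¹ ^ n)).ediam_image_le (trT T v)
  rw [map_pow_comm] at h
  rw [← diam_trT (T := T) (v := v)]
  exact h

lemma D_finite (hSA : SelfAffine A D T) : D.Finite := by
  obtain ⟨t, ht⟩ := hSA.1
  have hK : IsCompact ((rmat A).mulVec '' T) := hSA.2.1.image (continuous_mulVec _)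
  obtain ⟨R, hR⟩ := hK.isBounded.subset_closedBall t
  have hbound : ∀ e ∈ D, ‖rvec e‖ ≤ R := by
    intro e he
    have hmem : t + rvec e ∈ (rmat A).mulVec '' T := by
      rw [hSA.2.2]
      exact Set.mem_biUnion he ⟨t, ht, rfl⟩
    have := hR hmem
    rw [Metric.mem_closedBall] at this
    calc ‖rvec e‖ = dist (t + rvec e) t := by
          rw [dist_eq_norm]; congr 1; abel
      _ ≤ R := this
  apply Set.Finite.subset (Set.Finite.pi (fun i : Fin d => Set.finite_Icc (-⌈R⌉) ⌈R⌉))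
  intro e he
  rw [Set.mem_pi]
  intro i _
  have h1 : |(e i : ℝ)| ≤ R := by
    calc |(e i : ℝ)| = ‖rvec e i‖ := rfl
      _ ≤ ‖rvec e‖ := norm_le_pi_norm (rvec e) i
      _ ≤ R := hbound e he
  rw [abs_le] at h1
  constructor
  · have : (-⌈R⌉ : ℝ) ≤ (e i : ℝ) := by
      calc (-⌈R⌉ : ℝ) ≤ -R := by simpa using Int.le_ceil R
        _ ≤ (e i : ℝ) := h1.1
    exact_mod_cast this
  · have : ((e i : ℝ)) ≤ (⌈R⌉ : ℝ) := h1.2.trans (Int.le_ceil R)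
    exact_mod_cast this

end AuxCut
theorem statement4 {d : ℕ} (A : Matrix (Fin d) (Fin d) ℤ) (D : Set (Fin d → ℤ))
    (T : Set (Fin d → ℝ)) (htile : IsZdTile A D T) (hconn : IsConnected T)
    (n₀ : ℕ) (hn₀ : 1 ≤ n₀) (W₁ W₂ W₃ : ℕ → Set (Fin d → ℤ))
    -- `W₁, W₂, W₃` is a partition of `V_n` into pairwise disjoint nonempty sets
    (hpart : ∀ n, n₀ ≤ n → W₁ n ∪ W₂ n ∪ W₃ n = Vset A D n)
    (hd12 : ∀ n, n₀ ≤ n → Disjoint (W₁ n) (W₂ n))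
    (hd13 : ∀ n, n₀ ≤ n → Disjoint (W₁ n) (W₃ n))
    (hd23 : ∀ n, n₀ ≤ n → Disjoint (W₂ n) (W₃ n))
    (hne1 : ∀ n, n₀ ≤ n → (W₁ n).Nonempty)
    (hne2 : ∀ n, n₀ ≤ n → (W₂ n).Nonempty)
    (hne3 : ∀ n, n₀ ≤ n → (W₃ n).Nonempty)
    -- (i) the subgraph induced on `W₂` is connected and `W₂` separates `W₁` from `W₃`
    (hW2conn : ∀ n, n₀ ≤ n → HataConn T (W₂ n))
    (hsep : ∀ n, n₀ ≤ n → ∀ v ∈ W₁ n, ∀ v' ∈ W₃ n, trT T v ∩ trT T v' = ∅)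
    -- (ii) the inclusion relations between consecutive levels
    (hc1 : ∀ n, n₀ ≤ n → W₁ (n + 1) ⊆ childSet A D (W₁ n) ∪ childSet A D (W₂ n))
    (hc2 : ∀ n, n₀ ≤ n → W₂ (n + 1) ⊆ childSet A D (W₂ n))
    (hc3 : ∀ n, n₀ ≤ n → W₃ (n + 1) ⊆ childSet A D (W₃ n) ∪ childSet A D (W₂ n))
    -- (iii) uniform bound on the cardinality of `W₂`
    (K : ℕ) (hK : ∀ n, n₀ ≤ n → (W₂ n).encard ≤ K) :
    ∃ z : Fin d → ℝ, (⋂ n ≥ n₀, XnSet A T n (W₂ n)) = {z} ∧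
      z ∈ T ∧ SepUnion (T \ {z}) := by
  classical
  -- degenerate case d = 0
  rcases Nat.eq_zero_or_pos d with hd0 | hd
  · exfalso
    obtain ⟨a, ha⟩ := hne1 n₀ le_rfl
    obtain ⟨b, hb⟩ := hne2 n₀ le_rfl
    have hab : a = b := by
      subst hd0
      exact Subsingleton.elim a b
    exact Set.disjoint_left.mp (hd12 n₀ le_rfl) ha (hab ▸ hb)
  obtain ⟨hexp, hres, hSA, hint, hcover, hpairwise⟩ := htile
  have hdet : IsUnit (rmat A).det := AuxCut.det_isUnit A hexp
  have hTne : T.Nonempty := hSA.1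
  have hTcomp : IsCompact T := hSA.2.1
  have hDfin : D.Finite := AuxCut.D_finite hSA
  have hVfin : ∀ n, (Vset A D n).Finite := AuxCut.Vset_finite hDfin
  have hsub1 : ∀ n, n₀ ≤ n → W₁ n ⊆ Vset A D n := by
    intro n hn; rw [← hpart n hn]; intro v hv; exact Or.inl (Or.inl hv)
  have hsub2 : ∀ n, n₀ ≤ n → W₂ n ⊆ Vset A D n := by
    intro n hn; rw [← hpart n hn]; intro v hv; exact Or.inl (Or.inr hv)
  have hsub3 : ∀ n, n₀ ≤ n → W₃ n ⊆ Vset A D n := by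
    intro n hn; rw [← hpart n hn]; intro v hv; exact Or.inr hv
  have hW1fin : ∀ n, n₀ ≤ n → (W₁ n).Finite := fun n hn => (hVfin n).subset (hsub1 n hn)
  have hW2fin : ∀ n, n₀ ≤ n → (W₂ n).Finite := fun n hn => (hVfin n).subset (hsub2 n hn)
  have hW3fin : ∀ n, n₀ ≤ n → (W₃ n).Finite := fun n hn => (hVfin n).subset (hsub3 n hn)
  set S : ℕ → Set (Fin d → ℝ) := fun n => XnSet A T n (W₂ n) with hS
  -- decomposition of T at each level n ≥ n₀
  have hdecomp : ∀ n, n₀ ≤ n →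
      XnSet A T n (W₁ n) ∪ S n ∪ XnSet A T n (W₃ n) = T := by
    intro n hn
    rw [hS, ← AuxCut.XnSet_union, ← AuxCut.XnSet_union, hpart n hn,
      AuxCut.XnSet_Vset hdet hSA n]
  -- monotonicity of S
  have hSdec : ∀ n, n₀ ≤ n → S (n + 1) ⊆ S n :=
    fun n hn => AuxCut.XnSet_mono_child hdet hSA (hc2 n hn)
  have hSmono : ∀ n m, n₀ ≤ n → n ≤ m → S m ⊆ S n := by
    intro n m hn hnm
    induction m, hnm using Nat.le_induction with
    | base => exact subset_rfl
    | succ m hnm ih => exact (hSdec m (hn.trans hnm)).trans ih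
  have hSsubT : ∀ n, n₀ ≤ n → S n ⊆ T :=
    fun n hn => AuxCut.XnSet_subset_T hdet hSA (hsub2 n hn)
  have hScomp : ∀ n, n₀ ≤ n → IsCompact (S n) :=
    fun n hn => AuxCut.XnSet_compact hTcomp (hW2fin n hn) n
  have hSne : ∀ n, n₀ ≤ n → (S n).Nonempty :=
    fun n hn => AuxCut.XnSet_nonempty hTne (hne2 n hn) n
  -- nonempty intersection
  have hIeq : (⋂ n, ⋂ (_ : n₀ ≤ n), S n) = ⋂ k : ℕ, S (n₀ + k) := by
    apply Set.Subset.antisymm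
    · intro x hx
      rw [Set.mem_iInter] at hx ⊢
      intro k
      exact Set.mem_iInter.mp (hx (n₀ + k)) (Nat.le_add_right _ _)
    · intro x hx
      rw [Set.mem_iInter] at hx ⊢
      intro n
      rw [Set.mem_iInter]
      intro hn
      obtain ⟨k, rfl⟩ := Nat.exists_eq_add_of_le hn
      exact hx k
  have hIne : (⋂ k : ℕ, S (n₀ + k)).Nonempty := by
    apply IsCompact.nonempty_iInter_of_sequence_nonempty_isCompact_isClosed
    · intro k
      rw [show n₀ + (k + 1) = (n₀ + k) + 1 by ring]
      exact hSdec (n₀ + k) (Nat.le_add_right _ _)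
    · intro k; exact hSne _ (Nat.le_add_right _ _)
    · exact hScomp _ (Nat.le_add_right _ _)
    · intro k; exact (hScomp _ (Nat.le_add_right _ _)).isClosed
  obtain ⟨z, hz⟩ := hIne
  have hzS : ∀ n, n₀ ≤ n → z ∈ S n := by
    intro n hn
    obtain ⟨k, rfl⟩ := Nat.exists_eq_add_of_le hn
    exact Set.mem_iInter.mp hz k
  have hzT : z ∈ T := hSsubT n₀ le_rfl (hzS n₀ le_rfl)
  -- norm convergence
  have hnorm := AuxCut.tendsto_inv_pow_norm A hexp
  have hdiamT : EMetric.diam T ≠ ⊤ := hTcomp.isBounded.ediam_ne_top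
  -- uniqueness of points in the intersection
  have huniq : ∀ x y : Fin d → ℝ, (∀ n, n₀ ≤ n → x ∈ S n) → (∀ n, n₀ ≤ n → y ∈ S n) →
      x = y := by
    intro x y hx hy
    have hbound : ∀ n, n₀ ≤ n → edist x y ≤
        ((K : ENNReal) * EMetric.diam T) *
          ‖((rmat A)⁻¹.map (Complex.ofReal : ℝ → ℂ)) ^ n‖₊ := by
      intro n hn
      obtain ⟨v, hv, hxv⟩ := Set.mem_iUnion₂.mp (hx n hn)
      obtain ⟨w, hw, hyw⟩ := Set.mem_iUnion₂.mp (hy n hn)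
      have hchain := hW2conn n hn v hv w hw
      have hchain' : Relation.ReflTransGen
          (fun a b => a ∈ W₂ n ∧ b ∈ W₂ n ∧ (AuxCut.piece A T n a ∩ AuxCut.piece A T n b).Nonempty)
          v w := by
        apply Relation.ReflTransGen.mono ?_ v w hchain
        rintro a b ⟨ha, hb, t, ht1, ht2⟩
        exact ⟨ha, hb, ((rmat A)⁻¹ ^ n) *ᵥ t, ⟨t, ht1, rfl⟩, ⟨t, ht2, rfl⟩⟩
      have hcard : ((hW2fin n hn).toFinset.card : ℕ) ≤ K := by
        have := hK n hn
        rwa [Set.Finite.encard_eq_coe_toFinset_card (hW2fin n hn), Nat.cast_le] at this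
      calc edist x y ≤ ((hW2fin n hn).toFinset.card : ENNReal) *
            (‖((rmat A)⁻¹.map (Complex.ofReal : ℝ → ℂ)) ^ n‖₊ * EMetric.diam T) :=
            AuxCut.chain_edist (hW2fin n hn)
              (fun i _ => AuxCut.diam_piece_le n i) hv hchain' hxv hyw
        _ ≤ (K : ENNReal) *
            (‖((rmat A)⁻¹.map (Complex.ofReal : ℝ → ℂ)) ^ n‖₊ * EMetric.diam T) := by
            have hcast : ((hW2fin n hn).toFinset.card : ENNReal) ≤ (K : ENNReal) := by
              exact_mod_cast hcard
            exact mul_le_mul_left hcast _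
        _ = ((K : ENNReal) * EMetric.diam T) *
            ‖((rmat A)⁻¹.map (Complex.ofReal : ℝ → ℂ)) ^ n‖₊ := by ring
    have htend : Filter.Tendsto (fun n : ℕ => ((K : ENNReal) * EMetric.diam T) *
        ‖((rmat A)⁻¹.map (Complex.ofReal : ℝ → ℂ)) ^ n‖₊) atTop (𝓝 0) := by
      have h1 : Filter.Tendsto
          (fun n : ℕ => (‖((rmat A)⁻¹.map (Complex.ofReal : ℝ → ℂ)) ^ n‖₊ : ENNReal))
          atTop (𝓝 0) := by
        rw [show ((0:ENNReal)) = ((0 : NNReal) : ENNReal) by simp]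
        rw [ENNReal.tendsto_coe]
        rw [← NNReal.tendsto_coe]
        simpa using hnorm
      have h2 : Filter.Tendsto (fun n : ℕ => ((K : ENNReal) * EMetric.diam T) *
          (‖((rmat A)⁻¹.map (Complex.ofReal : ℝ → ℂ)) ^ n‖₊ : ENNReal)) atTop
          (𝓝 (((K : ENNReal) * EMetric.diam T) * 0)) :=
        ENNReal.Tendsto.const_mul h1 (Or.inr (ENNReal.mul_ne_top (by simp) hdiamT))
      simpa using h2
    have hle : edist x y ≤ 0 := by
      apply ge_of_tendsto htend
      filter_upwards [Filter.eventually_ge_atTop n₀] with n hn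
      exact hbound n hn
    rw [← edist_eq_zero]
    exact le_antisymm hle zero_le
  -- the intersection is {z}
  have hInter : (⋂ n, ⋂ (_ : n₀ ≤ n), S n) = {z} := by
    apply Set.Subset.antisymm
    · intro x hx
      rw [Set.mem_iInter] at hx
      have : ∀ n, n₀ ≤ n → x ∈ S n := fun n hn => Set.mem_iInter.mp (hx n) hn
      rw [Set.mem_singleton_iff]
      exact huniq x z this hzS
    · intro x hx
      rw [Set.mem_singleton_iff] at hx
      subst hx
      rw [Set.mem_iInter]
      intro n
      rw [Set.mem_iInter]
      exact hzS n
  refine ⟨z, hInter, hzT, ?_⟩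
  -- separation part
  have hdecomp' : ∀ (Wa Wc : ℕ → Set (Fin d → ℤ)),
      (∀ n, n₀ ≤ n → Wa n ∪ W₂ n ∪ Wc n = Vset A D n) →
      ∀ n, n₀ ≤ n → XnSet A T n (Wa n) ∪ S n ∪ XnSet A T n (Wc n) = T := by
    intro Wa Wc hpart' n hn
    rw [hS, ← AuxCut.XnSet_union, ← AuxCut.XnSet_union, hpart' n hn,
      AuxCut.XnSet_Vset hdet hSA n]
  have hchild2 : ∀ (Wa : ℕ → Set (Fin d → ℤ)),
      (∀ n, n₀ ≤ n → Wa (n+1) ⊆ childSet A D (Wa n) ∪ childSet A D (W₂ n)) →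
      ∀ n, n₀ ≤ n → XnSet A T (n+1) (Wa (n+1)) ⊆ XnSet A T n (Wa n) ∪ S n := by
    intro Wa hca n hn
    intro x hx
    have h1 : XnSet A T (n+1) (Wa (n+1)) ⊆
        XnSet A T (n+1) (childSet A D (Wa n) ∪ childSet A D (W₂ n)) :=
      AuxCut.XnSet_subset (n+1) (hca n hn)
    have h2 := h1 hx
    rw [AuxCut.XnSet_union, AuxCut.XnSet_child_eq hdet hSA,
      AuxCut.XnSet_child_eq hdet hSA] at h2
    exact h2
  have hback : ∀ (Wa : ℕ → Set (Fin d → ℤ)),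
      (∀ n, n₀ ≤ n → Wa (n+1) ⊆ childSet A D (Wa n) ∪ childSet A D (W₂ n)) →
      ∀ n m, n₀ ≤ n → n ≤ m → XnSet A T m (Wa m) ⊆ XnSet A T n (Wa n) ∪ S n := by
    intro Wa hca n m hn hnm
    induction m, hnm using Nat.le_induction with
    | base => exact Set.subset_union_left
    | succ m hnm ih =>
      refine (hchild2 Wa hca m (hn.trans hnm)).trans (Set.union_subset ih ?_)
      exact (hSmono n m hn hnm).trans Set.subset_union_right
  have hsep' : ∀ n, n₀ ≤ n → XnSet A T n (W₁ n) ∩ XnSet A T n (W₃ n) = ∅ :=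
    fun n hn => AuxCut.XnSet_disjoint hdet (hsep n hn)
  have hsep3 : ∀ n, n₀ ≤ n → XnSet A T n (W₃ n) ∩ XnSet A T n (W₁ n) = ∅ := by
    intro n hn; rw [Set.inter_comm]; exact hsep' n hn
  have hpart3 : ∀ n, n₀ ≤ n → W₃ n ∪ W₂ n ∪ W₁ n = Vset A D n := by
    intro n hn
    rw [← hpart n hn]
    ext v; simp only [Set.mem_union]; tauto
  -- generic single forward step
  have hstep : ∀ (Wa Wc : ℕ → Set (Fin d → ℤ)),
      (∀ n, n₀ ≤ n → Wc (n+1) ⊆ childSet A D (Wc n) ∪ childSet A D (W₂ n)) →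
      (∀ n, n₀ ≤ n → Wa n ∪ W₂ n ∪ Wc n = Vset A D n) →
      (∀ n, n₀ ≤ n → XnSet A T n (Wa n) ∩ XnSet A T n (Wc n) = ∅) →
      ∀ n, n₀ ≤ n → ∀ x, x ∈ XnSet A T n (Wa n) \ S n →
        x ∈ XnSet A T (n+1) (Wa (n+1)) \ S (n+1) := by
    intro Wa Wc hcc hpart' hdisj n hn x hx
    obtain ⟨hxa, hxs⟩ := hx
    have hxS1 : x ∉ S (n+1) := fun h => hxs (hSdec n hn h)
    refine ⟨?_, hxS1⟩
    have hxT : x ∈ T := by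
      rw [← hdecomp' Wa Wc hpart' n hn]
      exact Or.inl (Or.inl hxa)
    rw [← hdecomp' Wa Wc hpart' (n+1) (hn.trans (Nat.le_succ n))] at hxT
    rcases hxT with (h | h) | h
    · exact h
    · exact absurd h hxS1
    · exfalso
      have h2 := hchild2 Wc hcc n hn h
      rcases h2 with h2 | h2
      · have := hdisj n hn
        rw [Set.eq_empty_iff_forall_notMem] at this
        exact this x ⟨hxa, h2⟩
      · exact hxs h2
  -- generic multi-step forward
  have hfwd : ∀ (Wa Wc : ℕ → Set (Fin d → ℤ)),
      (∀ n, n₀ ≤ n → Wc (n+1) ⊆ childSet A D (Wc n) ∪ childSet A D (W₂ n)) →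
      (∀ n, n₀ ≤ n → Wa n ∪ W₂ n ∪ Wc n = Vset A D n) →
      (∀ n, n₀ ≤ n → XnSet A T n (Wa n) ∩ XnSet A T n (Wc n) = ∅) →
      ∀ n m, n₀ ≤ n → n ≤ m → ∀ x, x ∈ XnSet A T n (Wa n) \ S n →
        x ∈ XnSet A T m (Wa m) \ S m := by
    intro Wa Wc hcc hpart' hdisj n m hn hnm x hx
    induction m, hnm using Nat.le_induction with
    | base => exact hx
    | succ m hnm ih => exact hstep Wa Wc hcc hpart' hdisj m (hn.trans hnm) x ih
  -- the two separated sets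
  set U : Set (Fin d → ℝ) :=
    ⋃ n, ⋃ (_ : n₀ ≤ n), (XnSet A T n (W₁ n) \ S n) with hU
  set V : Set (Fin d → ℝ) :=
    ⋃ n, ⋃ (_ : n₀ ≤ n), (XnSet A T n (W₃ n) \ S n) with hV
  -- U and V are contained in the closed sets X_a n ∪ S n
  have hUsub : ∀ n, n₀ ≤ n → U ⊆ XnSet A T n (W₁ n) ∪ S n := by
    intro n hn y hy
    rw [hU, Set.mem_iUnion₂] at hy
    obtain ⟨m, hm, hy⟩ := hy
    rcases le_or_gt m n with hmn | hnm
    · exact Or.inl (hfwd W₁ W₃ hc3 hpart hsep' m n hm hmn y hy).1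
    · exact hback W₁ hc1 n m hn hnm.le hy.1
  have hVsub : ∀ n, n₀ ≤ n → V ⊆ XnSet A T n (W₃ n) ∪ S n := by
    intro n hn y hy
    rw [hV, Set.mem_iUnion₂] at hy
    obtain ⟨m, hm, hy⟩ := hy
    rcases le_or_gt m n with hmn | hnm
    · exact Or.inl (hfwd W₃ W₁ hc1 hpart3 hsep3 m n hm hmn y hy).1
    · exact hback W₃ hc3 n m hn hnm.le hy.1
  -- nonemptiness
  have hNE : ∀ (Wa : ℕ → Set (Fin d → ℤ)), (Wa n₀).Nonempty →
      (∀ v ∈ Wa n₀, ∀ w ∈ W₂ n₀, v ≠ w) →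
      ∃ x, x ∈ XnSet A T n₀ (Wa n₀) \ S n₀ := by
    intro Wa hne hdisjv
    obtain ⟨v, hv⟩ := hne
    obtain ⟨t, ht⟩ := hint
    have hx₀ : t + rvec v ∈ interior (trT T v) := by
      have himg := (Homeomorph.addRight (rvec v)).image_interior T
      have : t + rvec v ∈ (Homeomorph.addRight (rvec v)) '' (interior T) :=
        ⟨t, ht, rfl⟩
      rw [himg] at this
      exact this
    set x₀ := t + rvec v with hx₀def
    refine ⟨((rmat A)⁻¹ ^ n₀) *ᵥ x₀, ?_, ?_⟩
    · exact Set.mem_biUnion hv ⟨x₀, interior_subset hx₀, rfl⟩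
    · intro hmem
      rw [show S n₀ = ⋃ w ∈ W₂ n₀, AuxCut.piece A T n₀ w from rfl,
        Set.mem_iUnion₂] at hmem
      obtain ⟨w, hw, s, hs, hsx⟩ := hmem
      have hsx0 : s = x₀ := AuxCut.mulVec_inv_pow_injective hdet n₀ hsx
      subst hsx0
      have hvw : v ≠ w := hdisjv v hv w hw
      have hemp : interior (trT T v) ∩ trT T w = ∅ := hpairwise hvw
      rw [Set.eq_empty_iff_forall_notMem] at hemp
      exact hemp x₀ ⟨hx₀, hs⟩
  have hUne : U.Nonempty := by
    obtain ⟨x, hx⟩ := hNE W₁ (hne1 n₀ le_rfl)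
      (fun v hv w hw => fun h => Set.disjoint_left.mp (hd12 n₀ le_rfl) hv (by rw [h]; exact hw))
    exact ⟨x, Set.mem_biUnion (le_refl n₀) hx⟩
  have hVne : V.Nonempty := by
    obtain ⟨x, hx⟩ := hNE W₃ (hne3 n₀ le_rfl)
      (fun v hv w hw => fun h => Set.disjoint_left.mp (hd23 n₀ le_rfl) hw (by rw [← h]; exact hv))
    exact ⟨x, Set.mem_biUnion (le_refl n₀) hx⟩
  -- T \ {z} = U ∪ V
  have hUVT : T \ {z} = U ∪ V := by
    apply Set.Subset.antisymm
    · rintro x ⟨hxT, hxz⟩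
      rw [Set.mem_singleton_iff] at hxz
      have hex : ∃ n, n₀ ≤ n ∧ x ∉ S n := by
        by_contra hcon
        push_neg at hcon
        have : x ∈ ⋂ n, ⋂ (_ : n₀ ≤ n), S n := by
          rw [Set.mem_iInter]
          intro n
          rw [Set.mem_iInter]
          intro hn
          exact hcon n hn
        rw [hInter, Set.mem_singleton_iff] at this
        exact hxz this
      obtain ⟨n, hn, hxs⟩ := hex
      have hxT' := hxT
      rw [← hdecomp n hn] at hxT'
      rcases hxT' with (h | h) | h
      · exact Or.inl (Set.mem_biUnion hn ⟨h, hxs⟩)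
      · exact absurd h hxs
      · exact Or.inr (Set.mem_biUnion hn ⟨h, hxs⟩)
    · intro x hx
      rcases hx with hx | hx
      · rw [hU, Set.mem_iUnion₂] at hx
        obtain ⟨n, hn, hx1, hx2⟩ := hx
        refine ⟨AuxCut.XnSet_subset_T hdet hSA (hsub1 n hn) hx1, ?_⟩
        rw [Set.mem_singleton_iff]
        intro h
        exact hx2 (h ▸ hzS n hn)
      · rw [hV, Set.mem_iUnion₂] at hx
        obtain ⟨n, hn, hx1, hx2⟩ := hx
        refine ⟨AuxCut.XnSet_subset_T hdet hSA (hsub3 n hn) hx1, ?_⟩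
        rw [Set.mem_singleton_iff]
        intro h
        exact hx2 (h ▸ hzS n hn)
  -- separation
  have hclosedU : ∀ n, n₀ ≤ n → IsClosed (XnSet A T n (W₁ n) ∪ S n) := by
    intro n hn
    exact (AuxCut.XnSet_closed hTcomp (hW1fin n hn) n).union
      (AuxCut.XnSet_closed hTcomp (hW2fin n hn) n)
  have hclosedV : ∀ n, n₀ ≤ n → IsClosed (XnSet A T n (W₃ n) ∪ S n) := by
    intro n hn
    exact (AuxCut.XnSet_closed hTcomp (hW3fin n hn) n).union
      (AuxCut.XnSet_closed hTcomp (hW2fin n hn) n)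
  have hsepUV : closure U ∩ V = ∅ := by
    rw [Set.eq_empty_iff_forall_notMem]
    rintro x ⟨hxc, hxv⟩
    rw [hV, Set.mem_iUnion₂] at hxv
    obtain ⟨n, hn, hx3, hxs⟩ := hxv
    have hclU : closure U ⊆ XnSet A T n (W₁ n) ∪ S n :=
      closure_minimal (hUsub n hn) (hclosedU n hn)
    rcases hclU hxc with h | h
    · have := hsep' n hn
      rw [Set.eq_empty_iff_forall_notMem] at this
      exact this x ⟨h, hx3⟩
    · exact hxs h
  have hsepVU : U ∩ closure V = ∅ := by
    rw [Set.eq_empty_iff_forall_notMem]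
    rintro x ⟨hxu, hxc⟩
    rw [hU, Set.mem_iUnion₂] at hxu
    obtain ⟨n, hn, hx1, hxs⟩ := hxu
    have hclV : closure V ⊆ XnSet A T n (W₃ n) ∪ S n :=
      closure_minimal (hVsub n hn) (hclosedV n hn)
    rcases hclV hxc with h | h
    · have := hsep' n hn
      rw [Set.eq_empty_iff_forall_notMem] at this
      exact this x ⟨hx1, h⟩
    · exact hxs h
  exact ⟨U, V, hUVT, hUne, hVne, hsepUV, hsepVU⟩
end
end
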